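/- arXiv:1502.01042 — 5 statements merged into one kernel-verified Lean document; each statement's English description precedes it below -/
import Mathlib

section
/- Let F be an algebraically closed field of characteristic 0, and let W ⊆ (F*)^n be an irreducible Zariski closed subset. Then for every natural number m ≥ 1 there exists an irreducible Zariski closed set X ⊆ (F*)^n such that {x^m : x ∈ X} = W, where x^m denotes coordinatewise m-th power. -/
def ZarClosed {F : Type*} [Field F] {n : ℕ} (S : Set (Fin n → F)) : Prop :=
  ∃ I : Set (MvPolynomial (Fin n) F), S = {x | ∀ p ∈ I, MvPolynomial.eval x p = 0}

def unitsSet (F : Type*) [Field F] (n : ℕ) : Set (Fin n → F) := {x | ∀ i, x i ≠ 0}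

def ZarClosedIn {F : Type*} [Field F] {n : ℕ} (U S : Set (Fin n → F)) : Prop :=
  ∃ W, ZarClosed W ∧ S = W ∩ U

def IrredIn {F : Type*} [Field F] {n : ℕ} (U S : Set (Fin n → F)) : Prop :=
  S.Nonempty ∧ ∀ C₁ C₂ : Set (Fin n → F), ZarClosedIn U C₁ → ZarClosedIn U C₂ →
    S = C₁ ∪ C₂ → S = C₁ ∨ S = C₂

def powMap {F : Type*} [Field F] {n : ℕ} (m : ℕ) (x : Fin n → F) : Fin n → F :=
  fun i => x i ^ m

open MvPolynomial

namespace RootsExistAux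

variable {F : Type*} [Field F] {n : ℕ}

lemma eval_bind₁' (x : Fin n → F) (g : Fin n → MvPolynomial (Fin n) F)
    (p : MvPolynomial (Fin n) F) :
    eval x (bind₁ g p) = eval (fun i => eval x (g i)) p :=
  eval₂Hom_bind₁ _ _ _ _

noncomputable def scaleHom (ζ : Fin n → F) :
    MvPolynomial (Fin n) F →ₐ[F] MvPolynomial (Fin n) F :=
  bind₁ fun i => C (ζ i) * X i

lemma eval_scaleHom (ζ x : Fin n → F) (p : MvPolynomial (Fin n) F) :
    eval x (scaleHom ζ p) = eval (fun i => ζ i * x i) p := by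
  rw [scaleHom, eval_bind₁']
  simp

lemma scaleHom_scaleHom (η ζ : Fin n → F) (p : MvPolynomial (Fin n) F) :
    scaleHom η (scaleHom ζ p) = scaleHom (fun i => η i * ζ i) p := by
  simp only [scaleHom, bind₁_bind₁]
  congr 1
  congr 1
  funext i
  rw [map_mul, bind₁_C_right, bind₁_X_right, map_mul]
  ring

lemma scaleHom_monomial (ζ : Fin n → F) (d : Fin n →₀ ℕ) (a : F) :
    scaleHom ζ (monomial d a) = monomial d (a * ∏ i ∈ d.support, ζ i ^ d i) := by
  rw [scaleHom, bind₁_monomial, monomial_eq, Finsupp.prod]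
  simp only [mul_pow, Finset.prod_mul_distrib, ← C_pow, map_mul]
  rw [map_prod (C : F →+* MvPolynomial (Fin n) F)]
  ring

lemma coeff_scaleHom (ζ : Fin n → F) (p : MvPolynomial (Fin n) F) (d : Fin n →₀ ℕ) :
    coeff d (scaleHom ζ p) = coeff d p * ∏ i ∈ d.support, ζ i ^ d i := by
  conv_lhs => rw [p.as_sum, map_sum]
  simp only [scaleHom_monomial]
  rw [coeff_sum]
  simp only [coeff_monomial]
  by_cases hd : d ∈ p.support
  · rw [Finset.sum_eq_single d]
    · simp
    · intro b _ hb; simp [hb]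
    · intro h; exact absurd hd h
  · rw [Finset.sum_eq_zero, MvPolynomial.notMem_support_iff.mp hd, zero_mul]
    intro b hb
    have : b ≠ d := fun h => hd (h ▸ hb)
    simp [this]


noncomputable def powHom (m : ℕ) :
    MvPolynomial (Fin n) F →ₐ[F] MvPolynomial (Fin n) F :=
  bind₁ fun i => (X i : MvPolynomial (Fin n) F) ^ m

lemma eval_powHom (m : ℕ) (x : Fin n → F) (p : MvPolynomial (Fin n) F) :
    eval x (powHom m p) = eval (fun i => x i ^ m) p := by
  rw [powHom, eval_bind₁']
  simp

lemma powHom_monomial (m : ℕ) (hm : m ≠ 0) (d : Fin n →₀ ℕ) (a : F) :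
    powHom m (monomial d a) = monomial (m • d) a := by
  rw [powHom, bind₁_monomial, monomial_eq, Finsupp.prod]
  have hsupp : (m • d).support = d.support := by
    ext i
    simp [Finsupp.mem_support_iff, hm]
  rw [hsupp]
  congr 1
  apply Finset.prod_congr rfl
  intro i _
  rw [← pow_mul]
  congr 1

lemma exists_powHom_eq (m : ℕ) (hm : m ≠ 0) (p : MvPolynomial (Fin n) F)
    (h : ∀ d ∈ p.support, ∀ i, m ∣ d i) : ∃ q, powHom m q = p := by
  classical
  refine ⟨∑ d ∈ p.support, monomial (d.mapRange (· / m) (Nat.zero_div m)) (coeff d p), ?_⟩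
  rw [map_sum]
  conv_rhs => rw [p.as_sum]
  apply Finset.sum_congr rfl
  intro d hd
  have hdd : m • Finsupp.mapRange (· / m) (Nat.zero_div m) d = d := by
    ext i
    rw [Finsupp.smul_apply, Finsupp.mapRange_apply, smul_eq_mul]
    exact Nat.mul_div_cancel' (h d hd i)
  rw [powHom_monomial m hm, hdd]


noncomputable def rootsTuple (m : ℕ) (F : Type*) [Field F] (n : ℕ) : Finset (Fin n → F) :=
  Fintype.piFinset fun _ => Polynomial.nthRootsFinset m (1 : F)

lemma mem_rootsTuple {m : ℕ} (hm : 0 < m) {ζ : Fin n → F} :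
    ζ ∈ rootsTuple m F n ↔ ∀ i, ζ i ^ m = 1 := by
  simp [rootsTuple, Fintype.mem_piFinset, Polynomial.mem_nthRootsFinset hm (1 : F)]

lemma one_mem_rootsTuple {m : ℕ} (hm : 0 < m) :
    (fun _ => (1 : F)) ∈ rootsTuple m F n :=
  (mem_rootsTuple hm).mpr fun _ => one_pow m

noncomputable def normPoly (m : ℕ) (p : MvPolynomial (Fin n) F) : MvPolynomial (Fin n) F :=
  ∏ ζ ∈ rootsTuple m F n, scaleHom ζ p

lemma eval_normPoly (m : ℕ) (x : Fin n → F) (p : MvPolynomial (Fin n) F) :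
    eval x (normPoly m p) = ∏ ζ ∈ rootsTuple m F n, eval (fun i => ζ i * x i) p := by
  rw [normPoly, map_prod]
  exact Finset.prod_congr rfl fun ζ _ => eval_scaleHom ζ x p

lemma normPoly_eval_zero {m : ℕ} (hm : 0 < m) {x : Fin n → F} {p : MvPolynomial (Fin n) F}
    (hp : eval x p = 0) : eval x (normPoly m p) = 0 := by
  rw [eval_normPoly]
  apply Finset.prod_eq_zero (one_mem_rootsTuple hm)
  simpa using hp

lemma scaleHom_normPoly {m : ℕ} (hm : 0 < m) {η : Fin n → F} (hη : η ∈ rootsTuple m F n)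
    (p : MvPolynomial (Fin n) F) : scaleHom η (normPoly m p) = normPoly m p := by
  have hη' := (mem_rootsTuple hm).mp hη
  have hηne : ∀ i, η i ≠ 0 := by
    intro i h
    have := hη' i
    rw [h, zero_pow hm.ne'] at this
    exact zero_ne_one this
  simp only [normPoly, map_prod, scaleHom_scaleHom]
  apply Finset.prod_nbij' (fun ζ => fun i => η i * ζ i) (fun ζ => fun i => (η i)⁻¹ * ζ i)
  · intro ζ hζ
    exact (mem_rootsTuple hm).mpr fun i => by
      rw [mul_pow, hη' i, one_mul, (mem_rootsTuple hm).mp hζ i]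
  · intro ζ hζ
    exact (mem_rootsTuple hm).mpr fun i => by
      rw [mul_pow, inv_pow, hη' i, inv_one, one_mul, (mem_rootsTuple hm).mp hζ i]
  · intro ζ _
    funext i
    exact inv_mul_cancel_left₀ (hηne i) (ζ i)
  · intro ζ _
    funext i
    exact mul_inv_cancel_left₀ (hηne i) (ζ i)
  · intro ζ _
    rfl


lemma normPoly_exponents_dvd [IsAlgClosed F] [CharZero F] {m : ℕ} (hm : 0 < m)
    (p : MvPolynomial (Fin n) F) (d : Fin n →₀ ℕ) (hd : d ∈ (normPoly m p).support)
    (i : Fin n) : m ∣ d i := by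
  classical
  haveI : NeZero ((m : F)) := ⟨Nat.cast_ne_zero.mpr hm.ne'⟩
  obtain ⟨ζ₀, hζ₀⟩ := HasEnoughRootsOfUnity.exists_primitiveRoot F m
  by_cases hi : i ∈ d.support
  · set η : Fin n → F := Function.update (fun _ => (1 : F)) i ζ₀ with hηdef
    have hη : η ∈ rootsTuple m F n := by
      refine (mem_rootsTuple hm).mpr fun j => ?_
      by_cases h : j = i
      · subst h; simp [hηdef, hζ₀.pow_eq_one]
      · simp [hηdef, Function.update_of_ne h]
    have hcoe := congrArg (coeff d) (scaleHom_normPoly hm hη p)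
    rw [coeff_scaleHom] at hcoe
    have hc : coeff d (normPoly m p) ≠ 0 := mem_support_iff.mp hd
    have hprod : ∏ j ∈ d.support, η j ^ d j = 1 := by
      have := hcoe
      nth_rewrite 2 [← mul_one (coeff d (normPoly m p))] at this
      exact mul_left_cancel₀ hc this
    have hsingle : ∏ j ∈ d.support, η j ^ d j = ζ₀ ^ d i := by
      rw [Finset.prod_eq_single i]
      · simp [hηdef]
      · intro j _ hj
        simp [hηdef, Function.update_of_ne hj]
      · intro h; exact absurd hi h
    rw [hsingle] at hprod
    exact (IsPrimitiveRoot.pow_eq_one_iff_dvd hζ₀ (d i)).mp hprod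
  · rw [Finsupp.notMem_support_iff.mp hi]
    exact dvd_zero m


noncomputable def vIdeal (X : Set (Fin n → F)) : Ideal (MvPolynomial (Fin n) F) where
  carrier := {p | ∀ x ∈ X, eval x p = 0}
  add_mem' := fun {a b} ha hb x hx => by simp [ha x hx, hb x hx]
  zero_mem' := fun x hx => by simp
  smul_mem' := fun c p hp x hx => by simp [hp x hx]

lemma mem_vIdeal {X : Set (Fin n → F)} {p : MvPolynomial (Fin n) F} :
    p ∈ vIdeal X ↔ ∀ x ∈ X, eval x p = 0 := Iff.rfl

lemma subset_of_zarClosedIn {U X : Set (Fin n → F)} (h : ZarClosedIn U X) : X ⊆ U := by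
  obtain ⟨W, _, rfl⟩ := h
  exact Set.inter_subset_right

lemma eq_vanish {U X : Set (Fin n → F)} (h : ZarClosedIn U X) :
    X = {x | ∀ p ∈ vIdeal X, eval x p = 0} ∩ U := by
  obtain ⟨V, ⟨I, rfl⟩, hXV⟩ := h
  apply Set.Subset.antisymm
  · intro x hx
    have hx' := hx
    rw [hXV] at hx'
    exact ⟨fun p hp => hp x hx, hx'.2⟩
  · intro x hx
    rw [hXV]
    refine ⟨?_, hx.2⟩
    intro p hp
    apply hx.1 p
    intro y hy
    have hy' := hy
    rw [hXV] at hy'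
    exact hy'.1 p hp

lemma image_zarClosedIn [IsAlgClosed F] [CharZero F] {m : ℕ} (hm : 0 < m)
    {X : Set (Fin n → F)} (hX : ZarClosedIn (unitsSet F n) X) :
    ZarClosedIn (unitsSet F n) (powMap m '' X) := by
  classical
  refine ⟨{w | ∀ q ∈ (vIdeal (powMap m '' X) : Set (MvPolynomial (Fin n) F)), eval w q = 0},
    ⟨_, rfl⟩, ?_⟩
  apply Set.Subset.antisymm
  · rintro w ⟨x, hx, rfl⟩
    have hxU : x ∈ unitsSet F n := subset_of_zarClosedIn hX hx
    refine ⟨fun q hq => hq _ ⟨x, hx, rfl⟩, fun i => pow_ne_zero m (hxU i)⟩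
  · rintro w ⟨hwV, hwU⟩
    have : ∀ i, ∃ z : F, z ^ m = w i := fun i => IsAlgClosed.exists_pow_nat_eq (w i) hm
    choose x hxw using this
    have hxU : x ∈ unitsSet F n := by
      intro i h
      exact hwU i (by rw [← hxw i, h, zero_pow hm.ne'])
    by_contra hwim
    have hroot : ∀ ζ ∈ rootsTuple m F n, (fun i => ζ i * x i) ∉ X := by
      intro ζ hζ hmem
      apply hwim
      refine ⟨_, hmem, ?_⟩
      funext i
      simp only [powMap]
      rw [mul_pow, (mem_rootsTuple hm).mp hζ i, one_mul, hxw i]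
    have hrootU : ∀ ζ ∈ rootsTuple m F n, (fun i => ζ i * x i) ∈ unitsSet F n := by
      intro ζ hζ i
      have h1 := (mem_rootsTuple hm).mp hζ i
      have : ζ i ≠ 0 := fun h => by rw [h, zero_pow hm.ne'] at h1; exact zero_ne_one h1
      exact mul_ne_zero this (hxU i)
    have hker : ∀ ζ ∈ rootsTuple m F n,
        ¬ vIdeal X ≤ RingHom.ker (eval (fun i => ζ i * x i)) := by
      intro ζ hζ hle
      apply hroot ζ hζ
      rw [eq_vanish hX]
      exact ⟨fun p hp => hle hp, hrootU ζ hζ⟩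
    have hnotsub : ¬ (vIdeal X : Set (MvPolynomial (Fin n) F)) ⊆
        ⋃ ζ ∈ rootsTuple m F n, ↑(RingHom.ker (eval (fun i => ζ i * x i))) := by
      intro hsub
      obtain ⟨ζ, hζ, hle⟩ := (Ideal.subset_union_prime (fun _ => (1 : F)) (fun _ => (1 : F))
        (fun ζ _ _ _ => RingHom.ker_isPrime _)).mp hsub
      exact hker ζ hζ hle
    rw [Set.not_subset] at hnotsub
    obtain ⟨p, hpJ, hpnot⟩ := hnotsub
    have hpne : ∀ ζ ∈ rootsTuple m F n, eval (fun i => ζ i * x i) p ≠ 0 := by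
      intro ζ hζ h
      exact hpnot (Set.mem_biUnion hζ (by exact h : p ∈ RingHom.ker (eval fun i => ζ i * x i)))
    obtain ⟨q, hq⟩ := exists_powHom_eq m hm.ne' (normPoly m p)
      (normPoly_exponents_dvd hm p)
    have hqI : q ∈ vIdeal (powMap m '' X) := by
      rintro w' ⟨y, hy, rfl⟩
      have : eval (fun i => y i ^ m) q = eval y (powHom m q) := (eval_powHom m y q).symm
      show eval (powMap m y) q = 0
      rw [show (powMap m y) = fun i => y i ^ m from rfl, this, hq]
      exact normPoly_eval_zero hm (hpJ y hy)
    have hzero := hwV q hqI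
    have hwx : w = fun i => x i ^ m := by funext i; rw [hxw i]
    rw [hwx, ← eval_powHom m x q, hq, eval_normPoly] at hzero
    exact (Finset.prod_ne_zero_iff.mpr hpne) hzero


lemma eq_of_vIdeal_eq {U X Y : Set (Fin n → F)} (hX : ZarClosedIn U X)
    (hY : ZarClosedIn U Y) (h : vIdeal X = vIdeal Y) : X = Y := by
  rw [eq_vanish hX, eq_vanish hY, h]

lemma vIdeal_antitone {X Y : Set (Fin n → F)} (h : X ⊆ Y) : vIdeal Y ≤ vIdeal X :=
  fun _ hp x hx => hp x (h hx)

end RootsExistAux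

open MvPolynomial RootsExistAux

/-- An `m`-th root of an irreducible variety `W ⊆ (F*)^n`: an irreducible Zariski closed
subset `X` of `(F*)^n` with `{x^m : x ∈ X} = W`. -/
def MthRoot {F : Type*} [Field F] {n : ℕ} (m : ℕ) (W X : Set (Fin n → F)) : Prop :=
  ZarClosedIn (unitsSet F n) X ∧ IrredIn (unitsSet F n) X ∧ powMap m '' X = W

/-- Every irreducible Zariski closed subset of `(F*)^n` has an `m`-th root for every `m ≥ 1`. -/
theorem roots_exist {F : Type*} [Field F] [IsAlgClosed F] [CharZero F] {n : ℕ}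
    (W : Set (Fin n → F)) (hWc : ZarClosedIn (unitsSet F n) W)
    (hWi : IrredIn (unitsSet F n) W) (m : ℕ) (hm : 1 ≤ m) :
    ∃ X : Set (Fin n → F), MthRoot m W X := by
  classical
  have hm0 : 0 < m := hm
  have hWU : W ⊆ unitsSet F n := subset_of_zarClosedIn hWc
  have hpowU : ∀ x : Fin n → F, x ∈ unitsSet F n → powMap m x ∈ unitsSet F n :=
    fun x hx i => pow_ne_zero m (hx i)
  -- the full preimage Y of W under powMap, inside the torus
  set Y : Set (Fin n → F) := {x | x ∈ unitsSet F n ∧ powMap m x ∈ W} with hYdef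
  have hYc : ZarClosedIn (unitsSet F n) Y := by
    obtain ⟨V, ⟨I, hVI⟩, hWV⟩ := hWc
    refine ⟨{x | ∀ q ∈ powHom (F := F) (n := n) m '' I, eval x q = 0}, ⟨_, rfl⟩, ?_⟩
    ext x
    simp only [hYdef, Set.mem_setOf_eq, Set.mem_inter_iff]
    constructor
    · rintro ⟨hxU, hxW⟩
      refine ⟨?_, hxU⟩
      rintro q ⟨p, hp, rfl⟩
      rw [eval_powHom]
      have : powMap m x ∈ V := (hWV ▸ hxW : powMap m x ∈ V ∩ unitsSet F n).1
      rw [hVI] at this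
      exact this p hp
    · rintro ⟨hxV, hxU⟩
      refine ⟨hxU, ?_⟩
      rw [hWV]
      refine ⟨?_, hpowU x hxU⟩
      rw [hVI]
      intro p hp
      rw [show (eval (powMap m x) p) = eval x (powHom m p) from (eval_powHom m x p).symm]
      exact hxV _ ⟨p, hp, rfl⟩
  have hYim : powMap m '' Y = W := by
    apply Set.Subset.antisymm
    · rintro w ⟨x, hx, rfl⟩
      exact hx.2
    · intro w hw
      have : ∀ i, ∃ z : F, z ^ m = w i := fun i => IsAlgClosed.exists_pow_nat_eq (w i) hm0
      choose x hxw using this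
      have hxU : x ∈ unitsSet F n := by
        intro i h
        exact hWU hw i (by rw [← hxw i, h, zero_pow hm0.ne'])
      have hxp : powMap m x = w := by funext i; exact hxw i
      exact ⟨x, ⟨hxU, hxp ▸ hw⟩, hxp⟩
  -- minimal closed subset whose image is W
  set S : Set (Set (Fin n → F)) :=
    {X | ZarClosedIn (unitsSet F n) X ∧ powMap m '' X = W} with hSdef
  have hYS : Y ∈ S := ⟨hYc, hYim⟩
  have hwf : WellFounded ((· > ·) : Ideal (MvPolynomial (Fin n) F) → _ → Prop) :=
    IsWellFounded.wf
  obtain ⟨J, ⟨X₀, hX₀S, rfl⟩, hJmax⟩ :=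
    hwf.has_min (vIdeal '' S) ⟨vIdeal Y, Y, hYS, rfl⟩
  have hmin : ∀ X' ∈ S, X' ⊆ X₀ → X' = X₀ := by
    intro X' hX'S hsub
    have hle : vIdeal X₀ ≤ vIdeal X' := vIdeal_antitone hsub
    have hnot : ¬ vIdeal X₀ < vIdeal X' := hJmax _ ⟨X', hX'S, rfl⟩
    have : vIdeal X' = vIdeal X₀ := by
      by_contra hne
      exact hnot (lt_of_le_of_ne hle (Ne.symm hne))
    exact eq_of_vIdeal_eq hX'S.1 hX₀S.1 this
  refine ⟨X₀, hX₀S.1, ⟨?_, ?_⟩, hX₀S.2⟩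
  · -- nonempty
    obtain ⟨w, hw⟩ := hWi.1
    have : w ∈ powMap m '' X₀ := hX₀S.2.symm ▸ hw
    obtain ⟨x, hx, -⟩ := this
    exact ⟨x, hx⟩
  · -- irreducibility via minimality
    intro C₁ C₂ hC₁ hC₂ hunion
    have hC₁sub : C₁ ⊆ X₀ := hunion ▸ Set.subset_union_left
    have hC₂sub : C₂ ⊆ X₀ := hunion ▸ Set.subset_union_right
    have him : W = powMap m '' C₁ ∪ powMap m '' C₂ := by
      rw [← Set.image_union, ← hunion, hX₀S.2]
    have := hWi.2 _ _ (image_zarClosedIn hm0 hC₁) (image_zarClosedIn hm0 hC₂) him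
    rcases this with h | h
    · left
      exact (hmin C₁ ⟨hC₁, h.symm⟩ hC₁sub).symm
    · right
      exact (hmin C₂ ⟨hC₂, h.symm⟩ hC₂sub).symm
end

section
/- Let F be an algebraically closed field of characteristic 0 and W ⊆ (F*)^n an irreducible Zariski closed subset. Then W has only finitely many m-th roots for each m: every irreducible variety X with {x^m : x ∈ X} = W is an irreducible component of the Zariski closed set Y = {x ∈ (F*)^n : x^m ∈ W}. -/
open MvPolynomial Set

namespace MthRootAux

variable {F : Type*} [Field F] {n : ℕ}

/-- coordinatewise scaling -/
def scale (ζ x : Fin n → F) : Fin n → F := fun i => ζ i * x i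

lemma eval_bind₁' (x : Fin n → F) (g : Fin n → MvPolynomial (Fin n) F)
    (p : MvPolynomial (Fin n) F) :
    eval x (bind₁ g p) = eval (fun i => eval x (g i)) p := by
  simpa using eval₂Hom_bind₁ (RingHom.id F) x g p

lemma zc_preimage_scale (ζ : Fin n → F) {S : Set (Fin n → F)} (hS : ZarClosed S) :
    ZarClosed (scale ζ ⁻¹' S) := by
  obtain ⟨I, rfl⟩ := hS
  refine ⟨(fun p => bind₁ (fun i => C (ζ i) * X i) p) '' I, ?_⟩
  have hfun : ∀ x : Fin n → F, (fun i => eval x (C (ζ i) * X i)) = scale ζ x := by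
    intro x; funext i; simp [scale]
  ext x
  simp only [mem_preimage, mem_setOf_eq]
  constructor
  · rintro h _ ⟨p, hp, rfl⟩
    rw [eval_bind₁', hfun]
    exact h p hp
  · intro h p hp
    have := h _ (Set.mem_image_of_mem _ hp)
    rwa [eval_bind₁', hfun] at this

lemma zc_inter {S T : Set (Fin n → F)} (hS : ZarClosed S) (hT : ZarClosed T) :
    ZarClosed (S ∩ T) := by
  obtain ⟨I, rfl⟩ := hS
  obtain ⟨J, rfl⟩ := hT
  refine ⟨I ∪ J, ?_⟩
  ext x
  simp only [mem_inter_iff, mem_setOf_eq, mem_union]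
  constructor
  · rintro ⟨h1, h2⟩ p (hp | hp)
    exacts [h1 p hp, h2 p hp]
  · intro h
    exact ⟨fun p hp => h p (Or.inl hp), fun p hp => h p (Or.inr hp)⟩

lemma zc_union {S T : Set (Fin n → F)} (hS : ZarClosed S) (hT : ZarClosed T) :
    ZarClosed (S ∪ T) := by
  obtain ⟨I, rfl⟩ := hS
  obtain ⟨J, rfl⟩ := hT
  refine ⟨Set.image2 (· * ·) I J, ?_⟩
  ext x
  simp only [mem_union, mem_setOf_eq]
  constructor
  · rintro (h | h) r hr <;> obtain ⟨p, hp, q, hq, rfl⟩ := hr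
    · simp only [map_mul, h p hp, zero_mul]
    · simp only [map_mul, h q hq, mul_zero]
  · intro h
    by_cases hI : ∀ p ∈ I, eval x p = 0
    · exact Or.inl hI
    · push_neg at hI
      obtain ⟨p, hp, hpx⟩ := hI
      refine Or.inr fun q hq => ?_
      have := h _ (Set.mem_image2_of_mem hp hq)
      rw [map_mul] at this
      exact (mul_eq_zero.1 this).resolve_left hpx

lemma zc_empty : ZarClosed (∅ : Set (Fin n → F)) := by
  refine ⟨{1}, ?_⟩
  ext x
  simp

lemma zcIn_subset {U S : Set (Fin n → F)} (h : ZarClosedIn U S) : S ⊆ U := by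
  obtain ⟨V, _, rfl⟩ := h
  exact inter_subset_right

lemma zcIn_inter {U S T : Set (Fin n → F)} (hS : ZarClosedIn U S) (hT : ZarClosedIn U T) :
    ZarClosedIn U (S ∩ T) := by
  obtain ⟨V, hV, rfl⟩ := hS
  obtain ⟨V', hV', rfl⟩ := hT
  exact ⟨V ∩ V', zc_inter hV hV', by ext x; simp; tauto⟩

lemma zcIn_union {U S T : Set (Fin n → F)} (hS : ZarClosedIn U S) (hT : ZarClosedIn U T) :
    ZarClosedIn U (S ∪ T) := by
  obtain ⟨V, hV, rfl⟩ := hS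
  obtain ⟨V', hV', rfl⟩ := hT
  exact ⟨V ∪ V', zc_union hV hV', by ext x; simp; tauto⟩

lemma zcIn_empty (U : Set (Fin n → F)) : ZarClosedIn U (∅ : Set (Fin n → F)) :=
  ⟨∅, zc_empty, by simp⟩

/-- inverse scaling -/
lemma scale_inv (ζ : Fin n → F) (hζ : ∀ i, ζ i ≠ 0) :
    Function.LeftInverse (scale fun i => (ζ i)⁻¹) (scale ζ) := by
  intro x
  funext i
  simp only [scale]
  rw [← mul_assoc, inv_mul_cancel₀ (hζ i), one_mul]

lemma scale_inv' (ζ : Fin n → F) (hζ : ∀ i, ζ i ≠ 0) :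
    Function.RightInverse (scale fun i => (ζ i)⁻¹) (scale ζ) := by
  intro x
  funext i
  simp only [scale]
  rw [← mul_assoc, mul_inv_cancel₀ (hζ i), one_mul]

lemma scale_preimage_units (ζ : Fin n → F) (hζ : ∀ i, ζ i ≠ 0) :
    scale ζ ⁻¹' unitsSet F n = unitsSet F n := by
  ext x
  simp only [mem_preimage, unitsSet, mem_setOf_eq, scale]
  exact forall_congr' fun i => by simp [mul_ne_zero_iff, hζ i]

lemma zcIn_image_scale {ζ : Fin n → F} (hζ : ∀ i, ζ i ≠ 0) {S : Set (Fin n → F)}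
    (h : ZarClosedIn (unitsSet F n) S) : ZarClosedIn (unitsSet F n) (scale ζ '' S) := by
  obtain ⟨V, hV, rfl⟩ := h
  have hinv : ∀ i, (fun i => (ζ i)⁻¹) i ≠ 0 := fun i => inv_ne_zero (hζ i)
  have himg : scale ζ '' (V ∩ unitsSet F n)
      = (scale fun i => (ζ i)⁻¹) ⁻¹' (V ∩ unitsSet F n) :=
    congrFun (Set.image_eq_preimage_of_inverse (scale_inv ζ hζ) (scale_inv' ζ hζ)) _
  rw [himg, Set.preimage_inter, scale_preimage_units _ hinv]
  exact ⟨_, zc_preimage_scale _ hV, rfl⟩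

lemma scale_image_image {ζ : Fin n → F} (hζ : ∀ i, ζ i ≠ 0) (S : Set (Fin n → F)) :
    (scale fun i => (ζ i)⁻¹) '' (scale ζ '' S) = S :=
  (scale_inv ζ hζ).image_image S

lemma scale_image_image' {ζ : Fin n → F} (hζ : ∀ i, ζ i ≠ 0) (S : Set (Fin n → F)) :
    scale ζ '' ((scale fun i => (ζ i)⁻¹) '' S) = S :=
  Function.LeftInverse.image_image (scale_inv' ζ hζ) S

lemma irredIn_image_scale {ζ : Fin n → F} (hζ : ∀ i, ζ i ≠ 0) {S : Set (Fin n → F)}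
    (h : IrredIn (unitsSet F n) S) : IrredIn (unitsSet F n) (scale ζ '' S) := by
  obtain ⟨hne, hsplit⟩ := h
  have hinv : ∀ i, (fun i => (ζ i)⁻¹) i ≠ 0 := fun i => inv_ne_zero (hζ i)
  refine ⟨hne.image _, fun C₁ C₂ hC₁ hC₂ heq => ?_⟩
  have hS : S = ((scale fun i => (ζ i)⁻¹) '' C₁) ∪ ((scale fun i => (ζ i)⁻¹) '' C₂) := by
    rw [← Set.image_union, ← heq, scale_image_image hζ]
  rcases hsplit _ _ (zcIn_image_scale hinv hC₁) (zcIn_image_scale hinv hC₂) hS with h1 | h1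
  · left; rw [h1, scale_image_image' hζ]
  · right; rw [h1, scale_image_image' hζ]

lemma zcIn_biUnion {U : Set (Fin n → F)} {ι : Type*} [DecidableEq ι] (t : Finset ι)
    (C : ι → Set (Fin n → F)) (hC : ∀ i ∈ t, ZarClosedIn U (C i)) :
    ZarClosedIn U (⋃ i ∈ t, C i) := by
  induction t using Finset.induction_on with
  | empty => simpa using zcIn_empty U
  | @insert b r hb ih =>
    rw [Finset.set_biUnion_insert]
    exact zcIn_union (hC b (by simp)) (ih fun i hi => hC i (by simp [hi]))

/-- an irreducible closed-in-U set covered by finitely many closed-in-U sets lies in one -/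
lemma irred_cover {U S : Set (Fin n → F)} (hSc : ZarClosedIn U S) (hSi : IrredIn U S)
    {ι : Type*} [DecidableEq ι] (t : Finset ι) (C : ι → Set (Fin n → F))
    (hC : ∀ i ∈ t, ZarClosedIn U (C i)) (hsub : S ⊆ ⋃ i ∈ t, C i) :
    ∃ i ∈ t, S ⊆ C i := by
  induction t using Finset.induction_on with
  | empty =>
    simp only [Finset.notMem_empty, iUnion_of_empty, iUnion_empty,
      subset_empty_iff] at hsub
    exact absurd (hsub ▸ hSi.1) (by simp)
  | @insert a s ha ih =>
    have hRest : ZarClosedIn U (⋃ i ∈ s, C i) :=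
      zcIn_biUnion s C fun i hi => hC i (by simp [hi])
    have hsplit : S = (S ∩ C a) ∪ (S ∩ ⋃ i ∈ s, C i) := by
      rw [← Set.inter_union_distrib_left]
      rw [Finset.set_biUnion_insert] at hsub
      exact (Set.inter_eq_left.2 hsub).symm
    rcases hSi.2 _ _ (zcIn_inter hSc (hC a (by simp))) (zcIn_inter hSc hRest) hsplit with h1 | h1
    · exact ⟨a, by simp, by rw [h1]; exact inter_subset_right⟩
    · obtain ⟨i, hi, hisub⟩ := ih (fun i hi => hC i (by simp [hi]))
        (by rw [h1]; exact inter_subset_right)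
      exact ⟨i, by simp [hi], hisub⟩

/-- the set of tuples of m-th roots of unity -/
def mu (F : Type*) [Field F] (n m : ℕ) : Set (Fin n → F) := {ζ | ∀ i, ζ i ^ m = 1}

lemma mu_finite (m : ℕ) (hm : 1 ≤ m) : (mu F n m).Finite := by
  have h1 : ({a : F | a ^ m = 1}).Finite := by
    have : {a : F | a ^ m = 1} ⊆ ↑(Polynomial.nthRootsFinset m (1 : F)) := by
      intro a ha
      simpa [Polynomial.mem_nthRootsFinset hm] using ha
    exact (Polynomial.nthRootsFinset m (1 : F)).finite_toSet.subset this
  have : mu F n m ⊆ Set.pi Set.univ fun _ : Fin n => {a : F | a ^ m = 1} := by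
    intro ζ hζ i _
    exact hζ i
  exact (Set.Finite.pi fun _ => h1).subset this

lemma mu_ne_zero {m : ℕ} {ζ : Fin n → F} (hζ : ζ ∈ mu F n m) (hm : 1 ≤ m) :
    ∀ i, ζ i ≠ 0 := by
  intro i h
  have := hζ i
  rw [h, zero_pow (by omega)] at this
  exact zero_ne_one this

lemma powMap_scale {m : ℕ} {ζ : Fin n → F} (hζ : ζ ∈ mu F n m) (x : Fin n → F) :
    powMap m (scale ζ x) = powMap m x := by
  funext i
  simp [powMap, scale, mul_pow, hζ i]

/-- key covering: anything inside Y is covered by scalings of a root X -/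
lemma subset_union_scales {m : ℕ} {W X X' : Set (Fin n → F)}
    (hXU : X ⊆ unitsSet F n) (hXW : powMap m '' X = W)
    (hX' : X' ⊆ {x ∈ unitsSet F n | powMap m x ∈ W}) :
    X' ⊆ ⋃ ζ ∈ mu F n m, scale ζ '' X := by
  intro y hy
  obtain ⟨hyU, hyW⟩ := hX' hy
  rw [← hXW] at hyW
  obtain ⟨x, hx, hxy⟩ := hyW
  have hxU := hXU hx
  have hζmem : (fun i => y i * (x i)⁻¹) ∈ mu F n m := by
    intro i
    have hxm : x i ^ m = y i ^ m := congrFun hxy i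
    rw [mul_pow, inv_pow, hxm, mul_inv_cancel₀ (pow_ne_zero m (hyU i))]
  have hyim : y ∈ scale (fun i => y i * (x i)⁻¹) '' X := by
    refine ⟨x, hx, ?_⟩
    funext i
    simp only [scale]
    rw [mul_assoc, inv_mul_cancel₀ (hxU i), mul_one]
  exact Set.mem_biUnion hζmem hyim

lemma scale_scale (ζ ξ x : Fin n → F) : scale ζ (scale ξ x) = scale (fun i => ζ i * ξ i) x := by
  funext i; simp [scale, mul_assoc]

lemma iterate_scale (ζ : Fin n → F) (k : ℕ) (x : Fin n → F) :
    (scale ζ)^[k] x = scale (fun i => ζ i ^ k) x := by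
  induction k with
  | zero => funext i; simp [scale]
  | succ k ih =>
    rw [Function.iterate_succ_apply', ih, scale_scale]
    funext i
    show ζ i * ζ i ^ k * x i = ζ i ^ (k + 1) * x i
    ring

/-- if X ⊆ ζ·X with ζ^m = 1, m ≥ 1, then ζ·X ⊆ X -/
lemma scale_image_subset {m : ℕ} (hm : 1 ≤ m) {ζ : Fin n → F} (hζ : ζ ∈ mu F n m)
    {X : Set (Fin n → F)} (h : X ⊆ scale ζ '' X) : scale ζ '' X ⊆ X := by
  have hstep : ∀ k : ℕ, (scale ζ)^[k] '' X ⊆ (scale ζ)^[k + 1] '' X := by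
    intro k
    rw [Function.iterate_succ, Set.image_comp]
    exact Set.image_mono h
  have hchain : ∀ k : ℕ, 1 ≤ k → scale ζ '' X ⊆ (scale ζ)^[k] '' X := by
    intro k hk
    induction k with
    | zero => omega
    | succ k ih =>
      rcases Nat.eq_or_lt_of_le hk with h1 | h1
      · rw [← h1]; simp
      · exact (ih (by omega)).trans (hstep k)
  have hm' : (scale ζ)^[m] '' X = X := by
    have : (scale ζ)^[m] = id := by
      funext x
      rw [iterate_scale]
      funext i
      simp [scale, hζ i]
    rw [this, Set.image_id]
  calc scale ζ '' X ⊆ (scale ζ)^[m] '' X := hchain m hm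
    _ = X := hm'

lemma scale_mem_Y {m : ℕ} {W X : Set (Fin n → F)} (hm : 1 ≤ m) {ζ : Fin n → F}
    (hζ : ζ ∈ mu F n m) (hXU : X ⊆ unitsSet F n) (hXW : powMap m '' X = W) :
    scale ζ '' X ⊆ {x ∈ unitsSet F n | powMap m x ∈ W} := by
  rintro _ ⟨x, hx, rfl⟩
  refine ⟨fun i => mul_ne_zero (mu_ne_zero hζ hm i) (hXU hx i), ?_⟩
  rw [powMap_scale hζ, ← hXW]
  exact ⟨x, hx, rfl⟩

end MthRootAux

open MthRootAux in
/-- `W` has only finitely many `m`-th roots, and every `m`-th root of `W` is an irreducible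
component (maximal irreducible closed subset) of `Y = {x ∈ (F*)^n : x^m ∈ W}`. -/
theorem roots_finite_and_components {F : Type*} [Field F] [IsAlgClosed F] [CharZero F] {n : ℕ}
    (W : Set (Fin n → F)) (hWc : ZarClosedIn (unitsSet F n) W)
    (hWi : IrredIn (unitsSet F n) W) (m : ℕ) (hm : 1 ≤ m) :
    {X : Set (Fin n → F) | MthRoot m W X}.Finite ∧
    ∀ X : Set (Fin n → F), MthRoot m W X →
      X ⊆ {x ∈ unitsSet F n | powMap m x ∈ W} ∧
      ∀ X' : Set (Fin n → F), ZarClosedIn (unitsSet F n) X' → IrredIn (unitsSet F n) X' →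
        X ⊆ X' → X' ⊆ {x ∈ unitsSet F n | powMap m x ∈ W} → X' = X := by
  classical
  have part2 : ∀ X : Set (Fin n → F), MthRoot m W X →
      X ⊆ {x ∈ unitsSet F n | powMap m x ∈ W} ∧
      ∀ X' : Set (Fin n → F), ZarClosedIn (unitsSet F n) X' → IrredIn (unitsSet F n) X' →
        X ⊆ X' → X' ⊆ {x ∈ unitsSet F n | powMap m x ∈ W} → X' = X := by
    rintro X ⟨hXc, hXi, hXW⟩
    have hXU : X ⊆ unitsSet F n := zcIn_subset hXc
    have hXY : X ⊆ {x ∈ unitsSet F n | powMap m x ∈ W} := by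
      intro x hx
      exact ⟨hXU hx, by rw [← hXW]; exact ⟨x, hx, rfl⟩⟩
    refine ⟨hXY, fun X' hX'c hX'i hXX' hX'Y => ?_⟩
    have hcov : X' ⊆ ⋃ ζ ∈ mu F n m, scale ζ '' X :=
      subset_union_scales hXU hXW hX'Y
    have hcov' : X' ⊆ ⋃ ζ ∈ (mu_finite (F := F) (n := n) m hm).toFinset, scale ζ '' X := by
      intro y hy
      obtain ⟨ζ, hζ, hmem⟩ := Set.mem_iUnion₂.mp (hcov hy)
      exact Set.mem_biUnion ((mu_finite m hm).mem_toFinset.mpr hζ) hmem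
    obtain ⟨ζ, hζt, hsub⟩ := irred_cover hX'c hX'i
      ((mu_finite (F := F) (n := n) m hm).toFinset) (fun ζ => scale ζ '' X)
      (fun ζ hζ => zcIn_image_scale
        (mu_ne_zero ((mu_finite m hm).mem_toFinset.mp hζ) hm) hXc) hcov'
    have hζ : ζ ∈ mu F n m := (mu_finite m hm).mem_toFinset.mp hζt
    have h1 : X ⊆ scale ζ '' X := hXX'.trans hsub
    have h2 : scale ζ '' X ⊆ X := scale_image_subset hm hζ h1
    exact Set.Subset.antisymm (hsub.trans h2) hXX'
  refine ⟨?_, part2⟩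
  rcases Set.eq_empty_or_nonempty {X : Set (Fin n → F) | MthRoot m W X} with he | ⟨X₀, hX₀⟩
  · rw [he]; exact Set.finite_empty
  · have hset : {X : Set (Fin n → F) | MthRoot m W X}
        ⊆ (fun ζ => scale ζ '' X₀) '' mu F n m := by
      intro X hX
      obtain ⟨hXc, hXi, hXW⟩ := hX
      obtain ⟨hX₀c, hX₀i, hX₀W⟩ := hX₀
      have hX₀U : X₀ ⊆ unitsSet F n := zcIn_subset hX₀c
      have hXY := (part2 X ⟨hXc, hXi, hXW⟩).1
      have hcov : X ⊆ ⋃ ζ ∈ mu F n m, scale ζ '' X₀ :=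
        subset_union_scales hX₀U hX₀W hXY
      have hcov' : X ⊆ ⋃ ζ ∈ (mu_finite (F := F) (n := n) m hm).toFinset, scale ζ '' X₀ := by
        intro y hy
        obtain ⟨ζ, hζ, hmem⟩ := Set.mem_iUnion₂.mp (hcov hy)
        exact Set.mem_biUnion ((mu_finite m hm).mem_toFinset.mpr hζ) hmem
      obtain ⟨ζ, hζt, hsub⟩ := irred_cover hXc hXi
        ((mu_finite (F := F) (n := n) m hm).toFinset) (fun ζ => scale ζ '' X₀)
        (fun ζ hζ => zcIn_image_scale
          (mu_ne_zero ((mu_finite m hm).mem_toFinset.mp hζ) hm) hX₀c) hcov'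
      have hζ : ζ ∈ mu F n m := (mu_finite m hm).mem_toFinset.mp hζt
      have heq : scale ζ '' X₀ = X :=
        (part2 X ⟨hXc, hXi, hXW⟩).2 (scale ζ '' X₀)
          (zcIn_image_scale (mu_ne_zero hζ hm) hX₀c)
          (irredIn_image_scale (mu_ne_zero hζ hm) hX₀i)
          hsub (scale_mem_Y hm hζ hX₀U hX₀W)
      exact ⟨ζ, hζ, heq⟩
    exact (((mu_finite m hm).image _).subset hset)
end

section
/- Let exp : V → F* be a cover of the multiplicative group of an algebraically closed field F of characteristic 0, let T ⊆ (F*)^n be an irreducible torus and L ⊆ V^n an affine ℚ-subspace with exp(L) = T. Then for each m ≥ 1, exp(L/m) = exp({v/m : v ∈ L}) equals a single m-th root of T: i.e., exp(L/m) is an irreducible torus X with X^m = T. -/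
/-- A torus in `(F*)^n`: a set cut out by equations `∏ i, x i ^ z i = c` with `z : Fin n → ℤ`
and `c ∈ F*`. -/
def IsTorus {F : Type*} [Field F] {n : ℕ} (T : Set (Fin n → F)) : Prop :=
  ∃ E : Set ((Fin n → ℤ) × F), (∀ p ∈ E, p.2 ≠ 0) ∧
    T = {x | (∀ i, x i ≠ 0) ∧ ∀ p ∈ E, (∏ i, x i ^ p.1 i) = p.2}

def ZarIrred {F : Type*} [Field F] {n : ℕ} (S : Set (Fin n → F)) : Prop :=
  S.Nonempty ∧ ∀ C₁ C₂ : Set (Fin n → F), ZarClosed C₁ → ZarClosed C₂ →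
    S = C₁ ∪ C₂ → S = C₁ ∨ S = C₂

/-- The Zariski closure of a set: the intersection of all Zariski closed sets containing it. -/
def zclosure {F : Type*} [Field F] {n : ℕ} (S : Set (Fin n → F)) : Set (Fin n → F) :=
  ⋂₀ {W | ZarClosed W ∧ S ⊆ W}

/-- An affine subspace of `V^n` over `ℚ`: a coset of a `ℚ`-linear subspace. -/
def IsAffSub {V : Type*} [AddCommGroup V] [Module ℚ V] {n : ℕ} (L : Set (Fin n → V)) : Prop :=
  ∃ (U : Submodule ℚ (Fin n → V)) (v₀ : Fin n → V), L = (fun u => v₀ + u) '' (U : Set (Fin n → V))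

/-- The image of a subset of `V^n` under the coordinatewise map `exp`. -/
def expImg {V F : Type*} (e : V → F) {n : ℕ} (L : Set (Fin n → V)) : Set (Fin n → F) :=
  (fun v i => e (v i)) '' L


section Aux

variable {F : Type*} [Field F] {n : ℕ}

/-- Coordinatewise multiplication by a fixed vector. -/
def mulMap (d : Fin n → F) (x : Fin n → F) : Fin n → F := fun i => d i * x i

lemma zclosure_eq_vanishing (S : Set (Fin n → F)) :
    zclosure S = {x | ∀ p : MvPolynomial (Fin n) F,
      (∀ s ∈ S, MvPolynomial.eval s p = 0) → MvPolynomial.eval x p = 0} := by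
  apply subset_antisymm
  · apply Set.sInter_subset_of_mem
    refine ⟨⟨{p | ∀ s ∈ S, MvPolynomial.eval s p = 0}, rfl⟩, ?_⟩
    intro s hs p hp
    exact hp s hs
  · intro x hx W hW
    obtain ⟨⟨I, rfl⟩, hSW⟩ := hW
    intro p hp
    exact hx p (fun s hs => hSW hs p hp)

lemma zarClosed_zclosure (S : Set (Fin n → F)) : ZarClosed (zclosure S) := by
  rw [zclosure_eq_vanishing]
  exact ⟨{p | ∀ s ∈ S, MvPolynomial.eval s p = 0}, rfl⟩

lemma mulMap_preimage_closed (d : Fin n → F) {W : Set (Fin n → F)} (hW : ZarClosed W) :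
    ZarClosed (mulMap d ⁻¹' W) := by
  obtain ⟨I, rfl⟩ := hW
  refine ⟨(fun p => MvPolynomial.eval₂ MvPolynomial.C
    (fun i => MvPolynomial.C (d i) * MvPolynomial.X i) p) '' I, ?_⟩
  have hkey : ∀ (x : Fin n → F) (p : MvPolynomial (Fin n) F),
      MvPolynomial.eval x (MvPolynomial.eval₂ MvPolynomial.C
        (fun i => MvPolynomial.C (d i) * MvPolynomial.X i) p)
      = MvPolynomial.eval (mulMap d x) p := by
    intro x p
    rw [← MvPolynomial.eval_assoc]
    have : (⇑(MvPolynomial.eval x) ∘ fun i => MvPolynomial.C (d i) * MvPolynomial.X i)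
        = mulMap d x := by
      funext i
      simp [mulMap]
    rw [this]
  ext x
  simp only [Set.mem_preimage, Set.mem_setOf_eq, Set.forall_mem_image]
  constructor
  · intro h p hp
    rw [hkey]
    exact h p hp
  · intro h p hp
    have := h hp
    rwa [hkey] at this

lemma mulMap_mulMap_inv (d : Fin n → F) (hd : ∀ i, d i ≠ 0) (x : Fin n → F) :
    mulMap d (mulMap (fun i => (d i)⁻¹) x) = x := by
  ext i; simp [mulMap, mul_inv_cancel_left₀ (hd i)]

lemma mulMap_inv_mulMap (d : Fin n → F) (hd : ∀ i, d i ≠ 0) (x : Fin n → F) :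
    mulMap (fun i => (d i)⁻¹) (mulMap d x) = x := by
  ext i; simp [mulMap, inv_mul_cancel_left₀ (hd i)]

lemma mulMap_image_eq (d : Fin n → F) (hd : ∀ i, d i ≠ 0) (S : Set (Fin n → F)) :
    mulMap d '' S = mulMap (fun i => (d i)⁻¹) ⁻¹' S := by
  ext x
  constructor
  · rintro ⟨y, hy, rfl⟩
    simpa [Set.mem_preimage, mulMap_inv_mulMap d hd y] using hy
  · intro hx
    exact ⟨mulMap (fun i => (d i)⁻¹) x, hx, mulMap_mulMap_inv d hd x⟩

lemma mulMap_injective (d : Fin n → F) (hd : ∀ i, d i ≠ 0) :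
    Function.Injective (mulMap d) := by
  intro x y h
  have := congrArg (mulMap (fun i => (d i)⁻¹)) h
  rwa [mulMap_inv_mulMap d hd, mulMap_inv_mulMap d hd] at this

lemma zclosure_mulMap (d : Fin n → F) (hd : ∀ i, d i ≠ 0) (S : Set (Fin n → F)) :
    zclosure (mulMap d '' S) = mulMap d '' zclosure S := by
  apply subset_antisymm
  · apply Set.sInter_subset_of_mem
    constructor
    · rw [mulMap_image_eq d hd]
      exact mulMap_preimage_closed _ (zarClosed_zclosure S)
    · exact Set.image_mono (fun x hx => Set.mem_sInter.mpr fun W hW => hW.2 hx)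
  · rintro x ⟨y, hy, rfl⟩ W ⟨hWc, hWsub⟩
    exact hy _ ⟨mulMap_preimage_closed d hWc, fun s hs => hWsub ⟨s, hs, rfl⟩⟩

lemma zarIrred_mulMap (d : Fin n → F) (hd : ∀ i, d i ≠ 0) {Z : Set (Fin n → F)}
    (hZ : ZarIrred Z) : ZarIrred (mulMap d '' Z) := by
  obtain ⟨⟨z, hz⟩, hirr⟩ := hZ
  refine ⟨⟨mulMap d z, z, hz, rfl⟩, ?_⟩
  intro C₁ C₂ hC₁ hC₂ hunion
  have hZ' : Z = (mulMap d ⁻¹' C₁) ∪ (mulMap d ⁻¹' C₂) := by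
    ext y
    constructor
    · intro hy
      have : mulMap d y ∈ C₁ ∪ C₂ := by rw [← hunion]; exact ⟨y, hy, rfl⟩
      exact this.imp (fun h => h) (fun h => h)
    · rintro (hy | hy)
      all_goals {
        have hmem : mulMap d y ∈ mulMap d '' Z := by
          rw [hunion]
          first | exact Or.inl hy | exact Or.inr hy
        obtain ⟨y', hy', hyy⟩ := hmem
        rwa [← mulMap_injective d hd hyy] }
  rcases hirr _ _ (mulMap_preimage_closed d hC₁) (mulMap_preimage_closed d hC₂) hZ' with h | h
  · left
    apply subset_antisymm
    · rintro _ ⟨y, hy, rfl⟩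
      rw [h] at hy
      exact hy
    · intro c hc
      have : c ∈ C₁ ∪ C₂ := Or.inl hc
      rw [← hunion] at this
      exact this
  · right
    apply subset_antisymm
    · rintro _ ⟨y, hy, rfl⟩
      rw [h] at hy
      exact hy
    · intro c hc
      have : c ∈ C₁ ∪ C₂ := Or.inr hc
      rw [← hunion] at this
      exact this

lemma isTorus_mulMap (d : Fin n → F) (hd : ∀ i, d i ≠ 0) {T : Set (Fin n → F)}
    (hT : IsTorus T) : IsTorus (mulMap d '' T) := by
  obtain ⟨E, hE, rfl⟩ := hT
  refine ⟨(fun p => (p.1, (∏ i, d i ^ p.1 i) * p.2)) '' E, ?_, ?_⟩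
  · rintro _ ⟨p, hp, rfl⟩
    exact mul_ne_zero (Finset.prod_ne_zero_iff.mpr fun i _ => zpow_ne_zero _ (hd i)) (hE p hp)
  · ext y
    constructor
    · rintro ⟨x, ⟨hx0, hxE⟩, rfl⟩
      refine ⟨fun i => mul_ne_zero (hd i) (hx0 i), ?_⟩
      rintro _ ⟨p, hp, rfl⟩
      simp only [mulMap]
      calc (∏ i, (d i * x i) ^ p.1 i) = ∏ i, d i ^ p.1 i * x i ^ p.1 i := by
            apply Finset.prod_congr rfl; intro i _; exact mul_zpow _ _ _
        _ = (∏ i, d i ^ p.1 i) * ∏ i, x i ^ p.1 i := Finset.prod_mul_distrib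
        _ = (∏ i, d i ^ p.1 i) * p.2 := by rw [hxE p hp]
    · rintro ⟨hy0, hyE⟩
      refine ⟨mulMap (fun i => (d i)⁻¹) y, ⟨?_, ?_⟩, mulMap_mulMap_inv d hd y⟩
      · intro i
        exact mul_ne_zero (inv_ne_zero (hd i)) (hy0 i)
      · intro p hp
        have hyp := hyE _ ⟨p, hp, rfl⟩
        simp only at hyp
        have hdprod : (∏ i, d i ^ p.1 i) ≠ 0 :=
          Finset.prod_ne_zero_iff.mpr fun i _ => zpow_ne_zero _ (hd i)
        calc (∏ i, mulMap (fun i => (d i)⁻¹) y i ^ p.1 i)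
            = ∏ i, ((d i)⁻¹ ^ p.1 i * y i ^ p.1 i) := by
              apply Finset.prod_congr rfl; intro i _; exact mul_zpow _ _ _
          _ = (∏ i, (d i)⁻¹ ^ p.1 i) * ∏ i, y i ^ p.1 i := Finset.prod_mul_distrib
          _ = (∏ i, d i ^ p.1 i)⁻¹ * ((∏ i, d i ^ p.1 i) * p.2) := by
              rw [hyp]
              congr 1
              rw [← Finset.prod_inv_distrib]
              apply Finset.prod_congr rfl
              intro i _
              exact inv_zpow _ _
          _ = p.2 := by field_simp

end Aux

/-- If `T` is an irreducible torus and `L` an affine `ℚ`-subspace with `exp(L) = T`, then for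
each `m ≥ 1` the set `exp(L/m)` is a single `m`-th root of `T`: an irreducible torus `X` with
`X^m = T`. -/
theorem expImg_div_is_single_root {V F : Type*} [AddCommGroup V] [Module ℚ V] [Field F]
    [IsAlgClosed F] [CharZero F] (e : V → F)
    (hne : ∀ v, e v ≠ 0) (hadd : ∀ v w, e (v + w) = e v * e w)
    (hsurj : ∀ y : F, y ≠ 0 → ∃ v, e v = y)
    {n : ℕ} (T : Set (Fin n → F)) (hT : IsTorus T) (hTirr : ZarIrred (zclosure T))
    (L : Set (Fin n → V)) (hL : IsAffSub L) (hLT : expImg e L = T)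
    (m : ℕ) (hm : 1 ≤ m) :
    IsTorus (expImg e {v | ∃ w ∈ L, v = ((m : ℚ))⁻¹ • w}) ∧
    ZarIrred (zclosure (expImg e {v | ∃ w ∈ L, v = ((m : ℚ))⁻¹ • w})) ∧
    powMap m '' expImg e {v | ∃ w ∈ L, v = ((m : ℚ))⁻¹ • w} = T := by
    classical
  -- basic properties of e
  have he0 : e 0 = 1 := by
    have h := hadd 0 0
    rw [add_zero] at h
    field_simp [hne 0] at h
    exact h.symm
  have hmul : ∀ a b : V, e a * e b = e (a + b) := fun a b => (hadd a b).symm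
  have hpow : ∀ (k : ℕ) (v : V), e v ^ k = e ((k : ℚ) • v) := by
    intro k
    induction k with
    | zero => intro v; simp [he0]
    | succ k ih =>
      intro v
      rw [pow_succ, ih, hmul]
      congr 1
      push_cast
      rw [add_smul, one_smul]
  obtain ⟨U, v₀, rfl⟩ := hL
  set L' : Set (Fin n → V) :=
    {v | ∃ w ∈ (fun u => v₀ + u) '' (U : Set (Fin n → V)), v = ((m : ℚ))⁻¹ • w} with hL'
  set d : Fin n → F := fun i => e (((m : ℚ))⁻¹ • v₀ i - v₀ i) with hdd
  have hd : ∀ i, d i ≠ 0 := fun i => hne _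
  have hmQ : (m : ℚ) ≠ 0 := by
    have : (0:ℕ) < m := hm
    exact_mod_cast this.ne'
  -- key : expImg e L' = mulMap d '' T
  have key : expImg e L' = mulMap d '' T := by
    rw [← hLT]
    ext x
    constructor
    · rintro ⟨v, ⟨w, ⟨u, hu, rfl⟩, rfl⟩, rfl⟩
      refine ⟨fun i => e (v₀ i + ((m : ℚ))⁻¹ • u i),
        ⟨v₀ + ((m : ℚ))⁻¹ • u, ⟨((m : ℚ))⁻¹ • u, U.smul_mem _ hu, rfl⟩, by
          funext i; simp⟩, ?_⟩
      funext i
      show d i * e (v₀ i + ((m : ℚ))⁻¹ • u i) = e ((((m : ℚ))⁻¹ • (v₀ + u)) i)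
      rw [hdd]
      rw [hmul]
      congr 1
      simp only [Pi.smul_apply, Pi.add_apply, smul_add]
      abel
    · rintro ⟨t, ⟨w, ⟨u, hu, rfl⟩, rfl⟩, rfl⟩
      refine ⟨((m : ℚ))⁻¹ • (v₀ + (m : ℚ) • u), ⟨v₀ + (m : ℚ) • u,
        ⟨(m : ℚ) • u, U.smul_mem _ hu, rfl⟩, rfl⟩, ?_⟩
      funext i
      show e ((((m : ℚ))⁻¹ • (v₀ + (m : ℚ) • u)) i) = d i * e ((v₀ + u) i)
      rw [hdd]
      rw [hmul]
      symm
      congr 1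
      simp only [Pi.smul_apply, Pi.add_apply, smul_add, smul_smul,
        inv_mul_cancel₀ hmQ, one_smul]
      abel
  refine ⟨?_, ?_, ?_⟩
  · rw [key]
    exact isTorus_mulMap d hd hT
  · rw [key, zclosure_mulMap d hd]
    exact zarIrred_mulMap d hd hTirr
  · rw [← hLT]
    ext x
    constructor
    · rintro ⟨_, ⟨v, ⟨w, hw, rfl⟩, rfl⟩, rfl⟩
      refine ⟨w, hw, ?_⟩
      funext i
      show e (w i) = powMap m (fun i => e ((((m : ℚ))⁻¹ • w) i)) i
      simp only [powMap, Pi.smul_apply]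
      rw [hpow m, smul_smul, mul_inv_cancel₀ hmQ, one_smul]
    · rintro ⟨w, hw, rfl⟩
      refine ⟨fun i => e ((((m : ℚ))⁻¹ • w) i), ⟨((m : ℚ))⁻¹ • w, ⟨w, hw, rfl⟩, rfl⟩, ?_⟩
      funext i
      simp only [powMap, Pi.smul_apply]
      rw [hpow m, smul_smul, mul_inv_cancel₀ hmQ, one_smul]
end

section
/- Let F be an algebraically closed field and W ⊆ (F*)^n an irreducible Zariski closed set. Let T be the minimal torus containing W (possibly (F*)^n itself). Then W can be written as W = W' ∩ T, where W' is an irreducible Zariski closed set that is not contained in any proper torus. -/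
namespace TorusDecomp

variable {F : Type*} [Field F] {n : ℕ}

lemma mem_unitsSet {x : Fin n → F} : x ∈ unitsSet F n ↔ ∀ i, x i ≠ 0 := Iff.rfl

/-! ### Characters -/

def chF (z : Fin n → ℤ) (x : Fin n → F) : F := ∏ i, x i ^ z i

lemma chF_ne_zero {z : Fin n → ℤ} {x : Fin n → F} (hx : ∀ i, x i ≠ 0) : chF z x ≠ 0 :=
  Finset.prod_ne_zero_iff.2 fun i _ => zpow_ne_zero _ (hx i)

lemma chF_zero (x : Fin n → F) : chF (0 : Fin n → ℤ) x = 1 := by simp [chF]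

lemma chF_add {x : Fin n → F} (hx : ∀ i, x i ≠ 0) (z w : Fin n → ℤ) :
    chF (z + w) x = chF z x * chF w x := by
  simp only [chF, ← Finset.prod_mul_distrib]
  exact Finset.prod_congr rfl fun i _ => zpow_add₀ (hx i) _ _

lemma chF_smul (k : ℤ) (z : Fin n → ℤ) {x : Fin n → F} :
    chF (k • z) x = chF z x ^ k := by
  simp only [chF, ← Finset.prod_zpow]
  exact Finset.prod_congr rfl fun i _ => by
    rw [Pi.smul_apply, smul_eq_mul, mul_comm, zpow_mul]

lemma chF_single (x : Fin n → F) (i : Fin n) : chF (Pi.single i (1:ℤ)) x = x i := by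
  rw [chF, Finset.prod_eq_single i (fun j _ hj => by simp [Pi.single_eq_of_ne hj]) (by simp)]
  simp

lemma chF_mul (z : Fin n → ℤ) (x y : Fin n → F) :
    chF z (x * y) = chF z x * chF z y := by
  simp only [chF, ← Finset.prod_mul_distrib, Pi.mul_apply, mul_zpow]

lemma chF_inv (z : Fin n → ℤ) (x : Fin n → F) : chF z x⁻¹ = (chF z x)⁻¹ := by
  simp only [chF, ← Finset.prod_inv_distrib, Pi.inv_apply, inv_zpow]

lemma chF_sum {x : Fin n → F} (hx : ∀ i, x i ≠ 0) {ι : Type*} (s : Finset ι)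
    (g : ι → Fin n → ℤ) : chF (∑ i ∈ s, g i) x = ∏ i ∈ s, chF (g i) x := by
  classical
  induction s using Finset.induction with
  | empty => simp [chF_zero]
  | insert _ _ hi ih => rename_i a s; rw [Finset.sum_insert hi, chF_add hx,
      Finset.prod_insert hi, ih]

lemma sum_smul_single (z : Fin n → ℤ) :
    ∑ i, z i • (Pi.single i (1:ℤ) : Fin n → ℤ) = z := by
  have : ∀ i : Fin n, z i • (Pi.single i (1:ℤ) : Fin n → ℤ) = Pi.single i (z i) := by
    intro i; funext j; simp [Pi.single_apply, Pi.smul_apply, mul_ite]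
  simp_rw [this]; exact Finset.univ_sum_single z

/-! ### Monomial maps -/

def monM (c : Fin n → F) (A : (Fin n → ℤ) →ₗ[ℤ] (Fin n → ℤ)) (x : Fin n → F) :
    Fin n → F := fun i => c i * chF (A (Pi.single i 1)) x

lemma monM_ne_zero {c x : Fin n → F} {A : (Fin n → ℤ) →ₗ[ℤ] (Fin n → ℤ)}
    (hc : ∀ i, c i ≠ 0) (hx : ∀ i, x i ≠ 0) : ∀ i, monM c A x i ≠ 0 :=
  fun i => mul_ne_zero (hc i) (chF_ne_zero hx)

lemma chF_monM {c x : Fin n → F} {A : (Fin n → ℤ) →ₗ[ℤ] (Fin n → ℤ)}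
    (hx : ∀ i, x i ≠ 0) (z : Fin n → ℤ) :
    chF z (monM c A x) = chF z c * chF (A z) x := by
  have h1 : monM c A x = c * fun i => chF (A (Pi.single i 1)) x := rfl
  rw [h1, chF_mul]
  congr 1
  have h3 : chF z (fun i => chF (A (Pi.single i 1)) x)
      = ∏ i, chF (A (Pi.single i 1)) x ^ z i := rfl
  have h2 : ∀ i : Fin n, chF (A (Pi.single i 1)) x ^ z i = chF (z i • A (Pi.single i 1)) x :=
    fun i => (chF_smul _ _).symm
  rw [h3]
  simp_rw [h2, ← map_smul, ← chF_sum hx, ← map_sum, sum_smul_single]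

/-! ### Laurent polynomials -/

noncomputable def LEval (f : (Fin n → ℤ) →₀ F) (x : Fin n → F) : F :=
  f.sum fun z a => a * chF z x

lemma LEval_single (z : Fin n → ℤ) (a : F) (x : Fin n → F) :
    LEval (Finsupp.single z a) x = a * chF z x :=
  Finsupp.sum_single_index (by simp)

lemma LEval_add (f g : (Fin n → ℤ) →₀ F) (x : Fin n → F) :
    LEval (f + g) x = LEval f x + LEval g x :=
  Finsupp.sum_add_index (by simp) (by intros; rw [add_mul])

noncomputable def LEvalHom (x : Fin n → F) : ((Fin n → ℤ) →₀ F) →+ F :=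
  AddMonoidHom.mk' (fun f => LEval f x) (fun f g => LEval_add f g x)

lemma LEval_finsuppSum {ι : Type*} {M : Type*} [Zero M] (f : ι →₀ M)
    (g : ι → M → (Fin n → ℤ) →₀ F) (x : Fin n → F) :
    LEval (f.sum g) x = f.sum fun i a => LEval (g i a) x :=
  map_finsuppSum (LEvalHom x) f g

lemma LEval_finsetSum {ι : Type*} (s : Finset ι) (g : ι → (Fin n → ℤ) →₀ F)
    (x : Fin n → F) : LEval (∑ i ∈ s, g i) x = ∑ i ∈ s, LEval (g i) x :=
  map_sum (LEvalHom x) g s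

lemma LEval_sub (f g : (Fin n → ℤ) →₀ F) (x : Fin n → F) :
    LEval (f - g) x = LEval f x - LEval g x :=
  map_sub (LEvalHom x) f g

/-! ### Laurent characterization of Zariski closed subsets of the torus -/

lemma zarClosedIn_laurent (J : Set ((Fin n → ℤ) →₀ F)) :
    ZarClosedIn (unitsSet F n) {x | x ∈ unitsSet F n ∧ ∀ f ∈ J, LEval f x = 0} := by
  classical
  set N : ((Fin n → ℤ) →₀ F) → ℕ :=
    fun f => f.support.sup fun z => Finset.univ.sup fun i => (- z i).toNat with hN
  set toPoly : ((Fin n → ℤ) →₀ F) → MvPolynomial (Fin n) F := fun f =>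
    f.sum fun z a => MvPolynomial.monomial
      (Finsupp.equivFunOnFinite.symm fun i => (z i + (N f : ℤ)).toNat) a with htoPoly
  have key : ∀ f : (Fin n → ℤ) →₀ F, ∀ x : Fin n → F, (∀ i, x i ≠ 0) →
      MvPolynomial.eval x (toPoly f) = (∏ i, x i ^ (N f : ℤ)) * LEval f x := by
    intro f x hx
    rw [htoPoly, map_finsuppSum (MvPolynomial.eval x)]
    rw [LEval, Finsupp.mul_sum]
    apply Finsupp.sum_congr
    intro z hz
    rw [MvPolynomial.eval_monomial]
    rw [Finsupp.prod_fintype _ _ (fun i => pow_zero _)]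
    have hnn : ∀ i, (0:ℤ) ≤ z i + (N f : ℤ) := by
      intro i
      have h1 : (- z i).toNat ≤ N f := by
        refine le_trans (Finset.le_sup (f := fun i => (- z i).toNat) (Finset.mem_univ i)) ?_
        exact Finset.le_sup (f := fun z => Finset.univ.sup fun i => (- z i).toNat) hz
      have h2 : - z i ≤ ((- z i).toNat : ℤ) := Int.self_le_toNat _
      have h3 : ((- z i).toNat : ℤ) ≤ (N f : ℤ) := Int.ofNat_le.2 h1
      omega
    have hterm : ∀ i : Fin n,
        x i ^ ((Finsupp.equivFunOnFinite.symm fun i => (z i + (N f : ℤ)).toNat) i)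
          = x i ^ (z i) * x i ^ (N f : ℤ) := by
      intro i
      have : ((Finsupp.equivFunOnFinite.symm fun i => (z i + (N f : ℤ)).toNat) i)
          = (z i + (N f : ℤ)).toNat := rfl
      rw [this, ← zpow_natCast, Int.toNat_of_nonneg (hnn i), zpow_add₀ (hx i)]
    rw [Finset.prod_congr rfl (fun i _ => hterm i), Finset.prod_mul_distrib]
    show f z * ((chF z x) * ∏ i, x i ^ (N f : ℤ)) = (∏ i, x i ^ (N f : ℤ)) * (f z * chF z x)
    ring
  refine ⟨{x | ∀ p ∈ toPoly '' J, MvPolynomial.eval x p = 0}, ⟨_, rfl⟩, ?_⟩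
  ext x
  simp only [Set.mem_setOf_eq, Set.mem_inter_iff]
  constructor
  · rintro ⟨hx, h⟩
    refine ⟨?_, hx⟩
    rintro p ⟨f, hf, rfl⟩
    rw [key f x hx, h f hf, mul_zero]
  · rintro ⟨h, hx⟩
    refine ⟨hx, fun f hf => ?_⟩
    have := h (toPoly f) ⟨f, hf, rfl⟩
    rw [key f x hx] at this
    have hP : (∏ i, x i ^ (N f : ℤ)) ≠ 0 :=
      Finset.prod_ne_zero_iff.2 fun i _ => zpow_ne_zero _ (hx i)
    exact (mul_eq_zero.1 this).resolve_left hP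

lemma exists_laurent {S : Set (Fin n → F)} (hS : ZarClosedIn (unitsSet F n) S) :
    ∃ J : Set ((Fin n → ℤ) →₀ F),
      S = {x | x ∈ unitsSet F n ∧ ∀ f ∈ J, LEval f x = 0} := by
  classical
  obtain ⟨V, ⟨I, rfl⟩, rfl⟩ := hS
  set toL : MvPolynomial (Fin n) F → ((Fin n → ℤ) →₀ F) := fun p =>
    ∑ d ∈ p.support, Finsupp.single (fun i => (d i : ℤ)) (p.coeff d) with htoL
  have key : ∀ p : MvPolynomial (Fin n) F, ∀ x : Fin n → F,
      LEval (toL p) x = MvPolynomial.eval x p := by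
    intro p x
    rw [htoL, LEval_finsetSum, MvPolynomial.eval_eq']
    apply Finset.sum_congr rfl
    intro d _
    rw [LEval_single]
    congr 1
    rw [chF]
    exact Finset.prod_congr rfl fun i _ => by rw [zpow_natCast]
  refine ⟨toL '' I, ?_⟩
  ext x
  simp only [Set.mem_inter_iff, Set.mem_setOf_eq]
  constructor
  · rintro ⟨h, hx⟩
    refine ⟨hx, ?_⟩
    rintro f ⟨p, hp, rfl⟩
    rw [key p x]; exact h p hp
  · rintro ⟨hx, h⟩
    refine ⟨fun p hp => ?_, hx⟩
    rw [← key p x]; exact h (toL p) ⟨p, hp, rfl⟩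

/-- Monomial maps are continuous: preimages of Zariski closed subsets of the torus are
Zariski closed. -/
lemma zarClosedIn_preimage {S : Set (Fin n → F)} {c : Fin n → F} (hc : ∀ i, c i ≠ 0)
    (A : (Fin n → ℤ) →ₗ[ℤ] (Fin n → ℤ)) (hS : ZarClosedIn (unitsSet F n) S) :
    ZarClosedIn (unitsSet F n) {x | x ∈ unitsSet F n ∧ monM c A x ∈ S} := by
  classical
  obtain ⟨J, rfl⟩ := exists_laurent hS
  set pull : ((Fin n → ℤ) →₀ F) → ((Fin n → ℤ) →₀ F) := fun f =>
    f.sum fun z a => Finsupp.single (A z) (a * chF z c) with hpull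
  have key : ∀ f : (Fin n → ℤ) →₀ F, ∀ x : Fin n → F, (∀ i, x i ≠ 0) →
      LEval (pull f) x = LEval f (monM c A x) := by
    intro f x hx
    rw [hpull, LEval_finsuppSum, LEval]
    apply Finsupp.sum_congr
    intro z _
    rw [LEval_single, chF_monM hx]
    ring
  have hset : {x | x ∈ unitsSet F n ∧ monM c A x ∈
        {y | y ∈ unitsSet F n ∧ ∀ f ∈ J, LEval f y = 0}}
      = {x | x ∈ unitsSet F n ∧ ∀ g ∈ pull '' J, LEval g x = 0} := by
    ext x
    simp only [Set.mem_setOf_eq]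
    constructor
    · rintro ⟨hx, _, h⟩
      refine ⟨hx, ?_⟩
      rintro g ⟨f, hf, rfl⟩
      rw [key f x hx]; exact h f hf
    · rintro ⟨hx, h⟩
      refine ⟨hx, monM_ne_zero hc hx, fun f hf => ?_⟩
      rw [← key f x hx]; exact h (pull f) ⟨f, hf, rfl⟩
  rw [hset]
  exact zarClosedIn_laurent _


/-! ### Basic lemmas on Zariski closed subsets -/

lemma zarClosedIn_subset {U S : Set (Fin n → F)} (h : ZarClosedIn U S) : S ⊆ U := by
  obtain ⟨V, _, rfl⟩ := h; exact Set.inter_subset_right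

lemma zarClosedIn_self (U : Set (Fin n → F)) : ZarClosedIn U U :=
  ⟨Set.univ, ⟨∅, by simp⟩, (Set.univ_inter U).symm⟩

lemma zarClosedIn_empty (U : Set (Fin n → F)) : ZarClosedIn U ∅ := by
  refine ⟨∅, ⟨{1}, ?_⟩, by simp⟩
  ext x; simp

lemma zarClosedIn_inter {U S T : Set (Fin n → F)} (hS : ZarClosedIn U S)
    (hT : ZarClosedIn U T) : ZarClosedIn U (S ∩ T) := by
  obtain ⟨V, ⟨I, rfl⟩, rfl⟩ := hS
  obtain ⟨V', ⟨I', rfl⟩, rfl⟩ := hT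
  refine ⟨_, ⟨I ∪ I', rfl⟩, ?_⟩
  ext x
  simp only [Set.mem_inter_iff, Set.mem_setOf_eq, Set.mem_union]
  constructor
  · rintro ⟨⟨h1, hx⟩, h2, _⟩
    exact ⟨fun p hp => hp.elim (h1 p) (h2 p), hx⟩
  · rintro ⟨h, hx⟩
    exact ⟨⟨fun p hp => h p (Or.inl hp), hx⟩, fun p hp => h p (Or.inr hp), hx⟩

lemma zarClosedIn_iInter {ι : Sort*} [Nonempty ι] {U : Set (Fin n → F)}
    {D : ι → Set (Fin n → F)} (h : ∀ i, ZarClosedIn U (D i)) :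
    ZarClosedIn U (⋂ i, D i) := by
  classical
  choose V hV hD using h
  choose I hI using hV
  refine ⟨_, ⟨⋃ i, I i, rfl⟩, ?_⟩
  ext x
  simp only [Set.mem_iInter, Set.mem_inter_iff, Set.mem_setOf_eq, Set.mem_iUnion]
  constructor
  · intro hx
    have hxU : x ∈ U := by
      obtain ⟨i⟩ := ‹Nonempty ι›
      have := hx i; rw [hD i] at this; exact this.2
    refine ⟨?_, hxU⟩
    rintro p ⟨i, hp⟩
    have := hx i; rw [hD i, hI i] at this
    exact this.1 p hp
  · rintro ⟨h, hxU⟩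
    intro i
    rw [hD i, hI i]
    exact ⟨fun p hp => h p ⟨i, hp⟩, hxU⟩

lemma zarClosedIn_union {U S T : Set (Fin n → F)} (hS : ZarClosedIn U S)
    (hT : ZarClosedIn U T) : ZarClosedIn U (S ∪ T) := by
  obtain ⟨V, ⟨I, rfl⟩, rfl⟩ := hS
  obtain ⟨V', ⟨I', rfl⟩, rfl⟩ := hT
  refine ⟨_, ⟨{r | ∃ p ∈ I, ∃ q ∈ I', r = p * q}, rfl⟩, ?_⟩
  ext x
  simp only [Set.mem_union, Set.mem_inter_iff, Set.mem_setOf_eq]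
  constructor
  · rintro (⟨h, hx⟩ | ⟨h, hx⟩) <;> refine ⟨?_, hx⟩ <;>
      rintro r ⟨p, hp, q, hq, rfl⟩ <;> rw [map_mul]
    · rw [h p hp, zero_mul]
    · rw [h q hq, mul_zero]
  · rintro ⟨h, hx⟩
    by_cases hC : ∀ p ∈ I, MvPolynomial.eval x p = 0
    · exact Or.inl ⟨hC, hx⟩
    · push_neg at hC
      obtain ⟨p, hp, hpx⟩ := hC
      refine Or.inr ⟨fun q hq => ?_, hx⟩
      have := h (p * q) ⟨p, hp, q, hq, rfl⟩
      rw [map_mul] at this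
      exact (mul_eq_zero.1 this).resolve_left hpx

/-! ### Irreducibility -/


lemma exists_not_vanish {C V : Set (Fin n → F)} {I : Set (MvPolynomial (Fin n) F)}
    (hI : V = {x | ∀ p ∈ I, MvPolynomial.eval x p = 0}) (hC : C = V ∩ unitsSet F n)
    (hCne : unitsSet F n ≠ C) :
    ∃ p ∈ I, ∃ x ∈ unitsSet F n, MvPolynomial.eval x p ≠ 0 := by
  have hsub : C ⊆ unitsSet F n := hC ▸ Set.inter_subset_right
  have : ¬ (unitsSet F n ⊆ C) := fun hs => hCne (Set.Subset.antisymm hs hsub)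
  obtain ⟨x, hxu, hx⟩ := Set.not_subset.1 this
  have : x ∉ V := fun hv => hx (hC ▸ ⟨hv, hxu⟩)
  rw [hI] at this
  simp only [Set.mem_setOf_eq, not_forall] at this
  obtain ⟨p, hp, hpx⟩ := this
  exact ⟨p, hp, x, hxu, hpx⟩

lemma irredIn_units [Infinite F] : IrredIn (unitsSet F n) (unitsSet F n) := by
  refine ⟨⟨fun _ => 1, fun i => one_ne_zero⟩, ?_⟩
  intro C₁ C₂ h1 h2 hU
  by_contra hcon
  push_neg at hcon
  obtain ⟨hne1, hne2⟩ := hcon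
  obtain ⟨V1, ⟨I1, hI1⟩, hC1⟩ := h1
  obtain ⟨V2, ⟨I2, hI2⟩, hC2⟩ := h2
  obtain ⟨p, hp, x₁, hx₁u, hpx⟩ := exists_not_vanish hI1 hC1 hne1
  obtain ⟨q, hq, x₂, hx₂u, hqx⟩ := exists_not_vanish hI2 hC2 hne2
  have hg : ∀ y : Fin n → F, MvPolynomial.eval y (p * q * ∏ i, MvPolynomial.X i) = 0 := by
    intro y
    rw [map_mul, map_mul]
    by_cases hy : y ∈ unitsSet F n
    · have : y ∈ C₁ ∪ C₂ := hU ▸ hy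
      rcases this with hy1 | hy1
      · have : y ∈ V1 := (hC1 ▸ hy1 : y ∈ V1 ∩ _).1
        rw [hI1] at this
        rw [this p hp, zero_mul, zero_mul]
      · have : y ∈ V2 := (hC2 ▸ hy1 : y ∈ V2 ∩ _).1
        rw [hI2] at this
        rw [this q hq, mul_zero, zero_mul]
    · simp only [mem_unitsSet, not_forall, not_not] at hy
      obtain ⟨i, hi⟩ := hy
      rw [map_prod]
      rw [Finset.prod_eq_zero (Finset.mem_univ i) (by simp [hi])]
      ring
  have hgz : (p * q * ∏ i, MvPolynomial.X i : MvPolynomial (Fin n) F) = 0 := by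
    apply MvPolynomial.funext
    intro y
    rw [hg y, map_zero]
  have hpne : p ≠ 0 := fun h => hpx (by rw [h, map_zero])
  have hqne : q ≠ 0 := fun h => hqx (by rw [h, map_zero])
  have hXne : (∏ i, MvPolynomial.X i : MvPolynomial (Fin n) F) ≠ 0 :=
    Finset.prod_ne_zero_iff.2 fun i _ => MvPolynomial.X_ne_zero i
  exact (mul_ne_zero (mul_ne_zero hpne hqne) hXne) hgz

/-- The image of an irreducible closed set under a monomial map is irreducible. -/
lemma irredIn_image_monM {X : Set (Fin n → F)} {c : Fin n → F}
    (hc : ∀ i, c i ≠ 0) (A : (Fin n → ℤ) →ₗ[ℤ] (Fin n → ℤ))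
    (hXc : ZarClosedIn (unitsSet F n) X) (hXi : IrredIn (unitsSet F n) X) :
    IrredIn (unitsSet F n) (monM c A '' X) := by
  refine ⟨hXi.1.image _, ?_⟩
  intro C₁ C₂ h1 h2 hU
  have hXu : X ⊆ unitsSet F n := zarClosedIn_subset hXc
  have hpre : ∀ C : Set (Fin n → F), ZarClosedIn (unitsSet F n) C →
      ZarClosedIn (unitsSet F n) (X ∩ {x | x ∈ unitsSet F n ∧ monM c A x ∈ C}) :=
    fun C hC => zarClosedIn_inter hXc (zarClosedIn_preimage hc A hC)
  have hXeq : X = (X ∩ {x | x ∈ unitsSet F n ∧ monM c A x ∈ C₁})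
      ∪ (X ∩ {x | x ∈ unitsSet F n ∧ monM c A x ∈ C₂}) := by
    ext x
    simp only [Set.mem_union, Set.mem_inter_iff, Set.mem_setOf_eq]
    constructor
    · intro hx
      have : monM c A x ∈ C₁ ∪ C₂ := hU ▸ ⟨x, hx, rfl⟩
      rcases this with h | h
      · exact Or.inl ⟨hx, hXu hx, h⟩
      · exact Or.inr ⟨hx, hXu hx, h⟩
    · rintro (⟨hx, _⟩ | ⟨hx, _⟩) <;> exact hx
  rcases hXi.2 _ _ (hpre _ h1) (hpre _ h2) hXeq with hX | hX
  · left
    refine Set.Subset.antisymm ?_ (hU ▸ Set.subset_union_left)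
    rintro y ⟨x, hx, rfl⟩
    exact ((hX ▸ hx : x ∈ X ∩ _).2).2
  · right
    refine Set.Subset.antisymm ?_ (hU ▸ Set.subset_union_right)
    rintro y ⟨x, hx, rfl⟩
    exact ((hX ▸ hx : x ∈ X ∩ _).2).2

lemma zarClosedIn_biUnion {U : Set (Fin n → F)} {ι : Type*} [DecidableEq ι]
    (s : Finset ι) (C : ι → Set (Fin n → F)) (h : ∀ i ∈ s, ZarClosedIn U (C i)) :
    ZarClosedIn U (⋃ i ∈ s, C i) := by
  induction s using Finset.induction with
  | empty => simpa using zarClosedIn_empty U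
  | insert _ _ hni ih =>
    rename_i a s
    rw [Finset.set_biUnion_insert]
    exact zarClosedIn_union (h a (Finset.mem_insert_self a s))
      (ih fun i hi => h i (Finset.mem_insert_of_mem hi))

/-- An irreducible set covered by finitely many closed sets equals one of them. -/
lemma irredIn_finite_union {U S : Set (Fin n → F)} (hS : IrredIn U S)
    {ι : Type*} [DecidableEq ι] (s : Finset ι) (C : ι → Set (Fin n → F))
    (hC : ∀ i ∈ s, ZarClosedIn U (C i)) (hcov : S = ⋃ i ∈ s, C i) :
    ∃ i ∈ s, S = C i := by
  induction s using Finset.induction with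
  | empty =>
    exfalso
    obtain ⟨x, hx⟩ := hS.1
    rw [hcov] at hx
    simpa using hx
  | insert _ _ hni ih =>
    rename_i a s
    rw [Finset.set_biUnion_insert] at hcov
    have hrest : ZarClosedIn U (⋃ i ∈ s, C i) :=
      zarClosedIn_biUnion s C fun i hi => hC i (Finset.mem_insert_of_mem hi)
    rcases hS.2 _ _ (hC a (Finset.mem_insert_self a s)) hrest hcov with h | h
    · exact ⟨a, Finset.mem_insert_self a s, h⟩
    · obtain ⟨i, hi, hSi⟩ := ih (fun i hi => hC i (Finset.mem_insert_of_mem hi)) h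
      exact ⟨i, Finset.mem_insert_of_mem hi, hSi⟩


/-! ### Saturation -/

lemma chF_constant_of_pow [IsAlgClosed F] {W : Set (Fin n → F)}
    (hWc : ZarClosedIn (unitsSet F n) W) (hWi : IrredIn (unitsSet F n) W)
    {a : Fin n → F} (ha : a ∈ W) (z : Fin n → ℤ) (k : ℕ) (hk : 0 < k)
    (h : ∀ w ∈ W, chF ((k:ℤ) • z) w = chF ((k:ℤ) • z) a) :
    ∀ w ∈ W, chF z w = chF z a := by
  classical
  have hWu : W ⊆ unitsSet F n := zarClosedIn_subset hWc
  set c : F := chF ((k:ℤ) • z) a with hc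
  set s : Finset F := (Polynomial.nthRoots k c).toFinset with hs
  set C : F → Set (Fin n → F) := fun ζ => W ∩ {x | x ∈ unitsSet F n ∧
      LEval (Finsupp.single z 1 - Finsupp.single 0 ζ) x = 0} with hC
  have hCc : ∀ ζ, ZarClosedIn (unitsSet F n) (C ζ) := by
    intro ζ
    exact zarClosedIn_inter hWc (by
      have := zarClosedIn_laurent
        ({Finsupp.single z 1 - Finsupp.single 0 ζ} : Set ((Fin n → ℤ) →₀ F))
      simpa using this)
  have hmemC : ∀ x, ∀ ζ, x ∈ C ζ ↔ x ∈ W ∧ chF z x = ζ := by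
    intro x ζ
    rw [hC]
    simp only [Set.mem_inter_iff, Set.mem_setOf_eq]
    constructor
    · rintro ⟨hw, _, he⟩
      rw [LEval_sub, LEval_single, LEval_single, chF_zero, one_mul, mul_one,
        sub_eq_zero] at he
      exact ⟨hw, he⟩
    · rintro ⟨hw, he⟩
      refine ⟨hw, hWu hw, ?_⟩
      rw [LEval_sub, LEval_single, LEval_single, chF_zero, one_mul, mul_one,
        sub_eq_zero]
      exact he
  have hcov : W = ⋃ ζ ∈ s, C ζ := by
    ext x
    simp only [Set.mem_iUnion, exists_prop]
    constructor
    · intro hx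
      refine ⟨chF z x, ?_, (hmemC x _).2 ⟨hx, rfl⟩⟩
      rw [hs, Multiset.mem_toFinset, Polynomial.mem_nthRoots hk, ← zpow_natCast,
        ← chF_smul, h x hx]
    · rintro ⟨ζ, _, hζ⟩
      exact ((hmemC x ζ).1 hζ).1
  obtain ⟨ζ, _, hWζ⟩ := irredIn_finite_union hWi s C (fun ζ _ => hCc ζ) hcov
  intro w hw
  have h1 : chF z w = ζ := ((hmemC w ζ).1 (hWζ ▸ hw)).2
  have h2 : chF z a = ζ := ((hmemC a ζ).1 (hWζ ▸ ha)).2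
  rw [h1, h2]


end TorusDecomp

open TorusDecomp

/-- Every irreducible Zariski closed `W ⊆ (F*)^n` can be written as `W = W' ∩ T`, where `T` is
the minimal torus containing `W` and `W'` is an irreducible Zariski closed set not contained in
any proper torus. -/
theorem decomposition_torus_part {F : Type*} [Field F] [IsAlgClosed F] {n : ℕ}
    (W : Set (Fin n → F)) (hWc : ZarClosedIn (unitsSet F n) W)
    (hWi : IrredIn (unitsSet F n) W) :
    ∃ W' : Set (Fin n → F), ZarClosedIn (unitsSet F n) W' ∧ IrredIn (unitsSet F n) W' ∧
      (¬ ∃ S : Set (Fin n → F), IsTorus S ∧ S ≠ unitsSet F n ∧ W' ⊆ S) ∧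
      W = W' ∩ ⋂₀ {S : Set (Fin n → F) | IsTorus S ∧ W ⊆ S} := by
  classical
  obtain ⟨a, ha⟩ := hWi.1
  have hWu : W ⊆ unitsSet F n := zarClosedIn_subset hWc
  have hau : ∀ i, a i ≠ 0 := hWu ha
  -- the lattice of characters constant on W
  set Lsub : Submodule ℤ (Fin n → ℤ) :=
    { carrier := {z | ∀ w ∈ W, chF z w = chF z a}
      add_mem' := by
        intro z z' hz hz' w hw
        rw [chF_add (hWu hw), chF_add hau, hz w hw, hz' w hw]
      zero_mem' := by intro w hw; rw [chF_zero, chF_zero]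
      smul_mem' := by
        intro c z hz w hw
        rw [chF_smul, chF_smul, hz w hw] } with hLsub
  have hmemL : ∀ z : Fin n → ℤ, z ∈ Lsub ↔ ∀ w ∈ W, chF z w = chF z a := fun z => Iff.rfl
  -- saturation
  haveI : NoZeroSMulDivisors ℤ ((Fin n → ℤ) ⧸ Lsub) := by
    refine ⟨fun {c q} h => ?_⟩
    by_cases hc : c = 0
    · exact Or.inl hc
    · right
      obtain ⟨z, rfl⟩ := Submodule.mkQ_surjective Lsub q
      rw [Submodule.mkQ_apply, ← Submodule.Quotient.mk_smul,
        Submodule.Quotient.mk_eq_zero] at h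
      rw [Submodule.mkQ_apply, Submodule.Quotient.mk_eq_zero]
      have hnat : ((c.natAbs : ℤ)) • z ∈ Lsub := by
        rcases Int.natAbs_eq c with he | he
        · rwa [← he]
        · have hn : (c.natAbs : ℤ) = -c := by omega
          rw [hn, neg_smul]
          exact Lsub.neg_mem h
      exact (hmemL z).2 (chF_constant_of_pow hWc hWi ha z c.natAbs
        (Int.natAbs_pos.2 hc) ((hmemL _).1 hnat))
  -- splitting
  haveI : Module.Finite ℤ ((Fin n → ℤ) ⧸ Lsub) :=
    Module.Finite.of_surjective Lsub.mkQ (Submodule.mkQ_surjective Lsub)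
  obtain ⟨sec, hsec⟩ : ∃ s : ((Fin n → ℤ) ⧸ Lsub) →ₗ[ℤ] (Fin n → ℤ),
      Lsub.mkQ ∘ₗ s = LinearMap.id :=
    Module.projective_lifting_property Lsub.mkQ LinearMap.id (Submodule.mkQ_surjective Lsub)
  have hsec' : ∀ q, Lsub.mkQ (sec q) = q := fun q => congrArg (fun f => f q) hsec
  set piM : (Fin n → ℤ) →ₗ[ℤ] (Fin n → ℤ) := sec ∘ₗ Lsub.mkQ with hpiM
  set piL : (Fin n → ℤ) →ₗ[ℤ] (Fin n → ℤ) := LinearMap.id - piM with hpiL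
  have hsum : ∀ z, piL z + piM z = z := by
    intro z; rw [hpiL]; simp
  have hLmem : ∀ z, piL z ∈ Lsub := by
    intro z
    rw [← Submodule.ker_mkQ Lsub, LinearMap.mem_ker]
    rw [hpiL]
    simp only [LinearMap.sub_apply, LinearMap.id_apply, map_sub, hpiM,
      LinearMap.comp_apply]
    rw [hsec' (Lsub.mkQ z), sub_self]
  have hMzero : ∀ z ∈ Lsub, piM z = 0 := by
    intro z hz
    rw [hpiM, LinearMap.comp_apply, Submodule.mkQ_apply,
      (Submodule.Quotient.mk_eq_zero Lsub).2 hz, map_zero]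
  have hMM : ∀ z, piM (piM z) = piM z := by
    intro z
    show sec (Lsub.mkQ (sec (Lsub.mkQ z))) = sec (Lsub.mkQ z)
    rw [hsec' (Lsub.mkQ z)]
  have hLM : ∀ z, piL (piM z) = 0 := by
    intro z
    rw [hpiL]
    simp only [LinearMap.sub_apply, LinearMap.id_apply]
    rw [hMM z, sub_self]
  have hML : ∀ z, piM (piL z) = 0 := fun z => hMzero _ (hLmem z)
  -- the multiplicative structure
  set one : Fin n → F := fun _ => 1 with hone
  have hone_ne : ∀ i, one i ≠ 0 := fun i => one_ne_zero
  have chF_one : ∀ z : Fin n → ℤ, chF z one = 1 := by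
    intro z; rw [hone]; simp [chF]
  set pmap : (Fin n → F) → (Fin n → F) := monM one piL with hpmap
  set qmap : (Fin n → F) → (Fin n → F) := monM one piM with hqmap
  have hp_ne : ∀ x, (∀ i, x i ≠ 0) → ∀ i, pmap x i ≠ 0 :=
    fun x hx => monM_ne_zero hone_ne hx
  have hq_ne : ∀ x, (∀ i, x i ≠ 0) → ∀ i, qmap x i ≠ 0 :=
    fun x hx => monM_ne_zero hone_ne hx
  have hchp : ∀ x, (∀ i, x i ≠ 0) → ∀ z, chF z (pmap x) = chF (piL z) x := by
    intro x hx z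
    rw [hpmap, chF_monM hx, chF_one, one_mul]
  have hchq : ∀ x, (∀ i, x i ≠ 0) → ∀ z, chF z (qmap x) = chF (piM z) x := by
    intro x hx z
    rw [hqmap, chF_monM hx, chF_one, one_mul]
  have hpq : ∀ x, (∀ i, x i ≠ 0) → pmap x * qmap x = x := by
    intro x hx
    funext i
    show (one i * chF (piL (Pi.single i 1)) x) * (one i * chF (piM (Pi.single i 1)) x) = x i
    have : one i = 1 := rfl
    rw [this, one_mul, one_mul, ← chF_add hx, hsum, chF_single]
  have hpW : ∀ w ∈ W, pmap w = pmap a := by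
    intro w hw
    funext i
    show one i * chF (piL (Pi.single i 1)) w = one i * chF (piL (Pi.single i 1)) a
    rw [(hmemL _).1 (hLmem (Pi.single i 1)) w hw]
  have hpa_ne : ∀ i, pmap a i ≠ 0 := hp_ne a hau
  set Psi : (Fin n → F) → (Fin n → F) := monM (pmap a) piM with hPsi
  have hPsi_eq : ∀ x, Psi x = pmap a * qmap x := by
    intro x
    funext i
    show pmap a i * chF (piM (Pi.single i 1)) x = pmap a i * (one i * chF (piM (Pi.single i 1)) x)
    have : one i = 1 := rfl
    rw [this, one_mul]
  have hPsiW : ∀ w ∈ W, Psi w = w := by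
    intro w hw
    rw [hPsi_eq w, ← hpW w hw]
    exact hpq w (hWu hw)
  -- the minimal torus
  set T : Set (Fin n → F) :=
    {x | (∀ i, x i ≠ 0) ∧ ∀ z ∈ Lsub, chF z x = chF z a} with hT
  have hWT : W ⊆ T := fun w hw => ⟨hWu hw, fun z hz => (hmemL z).1 hz w hw⟩
  have hT_torus : IsTorus T := by
    refine ⟨(fun z => (z, chF z a)) '' Lsub, ?_, ?_⟩
    · rintro p ⟨z, hz, rfl⟩
      exact chF_ne_zero hau
    · ext x
      simp only [hT, Set.mem_setOf_eq, Set.mem_image, SetLike.mem_coe]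
      constructor
      · rintro ⟨hx1, h2⟩
        refine ⟨hx1, ?_⟩
        rintro p ⟨z, hz, rfl⟩
        exact h2 z hz
      · rintro ⟨hx1, h2⟩
        exact ⟨hx1, fun z hz => h2 (z, chF z a) ⟨z, hz, rfl⟩⟩
  have hTmin : ∀ S, IsTorus S → W ⊆ S → T ⊆ S := by
    rintro S ⟨E, hE, rfl⟩ hWS x hx
    refine ⟨hx.1, fun p hp => ?_⟩
    have hall : ∀ w ∈ W, chF p.1 w = p.2 := fun w hw => (hWS hw).2 p hp
    have hz : p.1 ∈ Lsub := (hmemL p.1).2 fun w hw => by rw [hall w hw, hall a ha]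
    show chF p.1 x = p.2
    rw [hx.2 p.1 hz, hall a ha]
  have hTeq : ⋂₀ {S : Set (Fin n → F) | IsTorus S ∧ W ⊆ S} = T :=
    Set.Subset.antisymm (Set.sInter_subset_of_mem ⟨hT_torus, hWT⟩)
      (Set.subset_sInter fun S hS => hTmin S hS.1 hS.2)
  -- the decomposition
  set W' : Set (Fin n → F) := {x | x ∈ unitsSet F n ∧ Psi x ∈ W} with hW'
  have hW'c : ZarClosedIn (unitsSet F n) W' := zarClosedIn_preimage hpa_ne piM hWc
  have hWsubW' : W ⊆ W' := fun w hw => ⟨hWu hw, by rw [hPsiW w hw]; exact hw⟩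
  have hWeq : W = W' ∩ T := by
    ext x
    constructor
    · intro hx
      exact ⟨hWsubW' hx, hWT hx⟩
    · rintro ⟨⟨hxu, hΨx⟩, hxT⟩
      have hpx : pmap x = pmap a := by
        funext i
        show one i * chF (piL (Pi.single i 1)) x = one i * chF (piL (Pi.single i 1)) a
        rw [hxT.2 _ (hLmem (Pi.single i 1))]
      have hxeq : Psi x = x := by
        rw [hPsi_eq, ← hpx]
        exact hpq x hxu
      rw [← hxeq]
      exact hΨx
  -- the complementary subtorus V
  set V : Set (Fin n → F) := pmap '' unitsSet F n with hV
  have hqp1 : ∀ y, (∀ i, y i ≠ 0) → ∀ z, chF z (qmap (pmap y)) = 1 := by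
    intro y hy z
    rw [hchq _ (hp_ne y hy), hchp y hy, hLM, chF_zero]
  have hVmem : ∀ x, x ∈ V ↔ (∀ i, x i ≠ 0) ∧ ∀ i, chF (piM (Pi.single i 1)) x = 1 := by
    intro x
    constructor
    · rintro ⟨y, hy, rfl⟩
      refine ⟨hp_ne y hy, fun i => ?_⟩
      rw [hchp _ hy, hLM, chF_zero]
    · rintro ⟨hx, h⟩
      refine ⟨x, hx, ?_⟩
      have hq1 : qmap x = one := by
        funext i
        show one i * chF (piM (Pi.single i 1)) x = one i
        rw [h i, mul_one]
      have := hpq x hx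
      rw [hq1] at this
      funext i
      have := congrArg (fun f => f i) this
      simpa [hone] using this
  have hVsub : V ⊆ unitsSet F n := fun x hx => ((hVmem x).1 hx).1
  have hVc : ZarClosedIn (unitsSet F n) V := by
    have := zarClosedIn_laurent ((fun i : Fin n =>
      Finsupp.single (piM (Pi.single i 1)) (1:F) - Finsupp.single 0 1) '' Set.univ)
    have heq : V = {x | x ∈ unitsSet F n ∧ ∀ f ∈ (fun i : Fin n =>
        Finsupp.single (piM (Pi.single i 1)) (1:F) - Finsupp.single 0 1) '' Set.univ,
        LEval f x = 0} := by
      ext x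
      rw [hVmem x]
      simp only [Set.mem_setOf_eq, Set.mem_image, Set.mem_univ, true_and]
      constructor
      · rintro ⟨hx, h⟩
        refine ⟨hx, ?_⟩
        rintro f ⟨i, rfl⟩
        rw [LEval_sub, LEval_single, LEval_single, chF_zero, one_mul, mul_one,
          sub_eq_zero]
        exact h i
      · rintro ⟨hx, h⟩
        refine ⟨hx, fun i => ?_⟩
        have := h _ ⟨i, rfl⟩
        rwa [LEval_sub, LEval_single, LEval_single, chF_zero, one_mul, mul_one,
          sub_eq_zero] at this
    rw [heq]
    exact this
  have hVi : IrredIn (unitsSet F n) V :=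
    irredIn_image_monM hone_ne piL (zarClosedIn_self _) irredIn_units
  have hqV1 : ∀ v ∈ V, ∀ z, chF z (qmap v) = 1 := by
    rintro v ⟨y, hy, rfl⟩ z
    exact hqp1 y hy z
  have hpmemV : ∀ x, (∀ i, x i ≠ 0) → pmap x ∈ V := fun x hx => ⟨x, hx, rfl⟩
  -- fibers of Psi lie in W'
  have hfib : ∀ w ∈ W, ∀ v ∈ V, w * v ∈ W' := by
    intro w hw v hv
    have hwu := hWu hw
    have hvu := hVsub hv
    have hwvu : ∀ i, (w * v) i ≠ 0 := fun i => mul_ne_zero (hwu i) (hvu i)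
    refine ⟨hwvu, ?_⟩
    have hq : qmap (w * v) = qmap w := by
      funext i
      show one i * chF (piM (Pi.single i 1)) (w * v) = one i * chF (piM (Pi.single i 1)) w
      rw [chF_mul]
      rw [((hVmem v).1 hv).2 i, mul_one]
    rw [hPsi_eq, hq, ← hPsi_eq, hPsiW w hw]
    exact hw
  -- W' is irreducible
  have haW' : a ∈ W' := hWsubW' ha
  have hW'i : IrredIn (unitsSet F n) W' := by
    refine ⟨⟨a, haW'⟩, ?_⟩
    intro C₁ C₂ h1 h2 hU
    haveI : Nonempty V := ⟨⟨pmap a, hpmemV a hau⟩⟩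
    have hmonM_mul : ∀ c x : Fin n → F, monM c LinearMap.id x = c * x := by
      intro c x
      funext i
      show c i * chF (Pi.single i 1) x = c i * x i
      rw [chF_single]
    -- the two pieces of W
    set W₁ : Set (Fin n → F) := W ∩ ⋂ v : V, {x | x ∈ unitsSet F n ∧
      monM v.1 LinearMap.id x ∈ C₁} with hW₁
    set W₂ : Set (Fin n → F) := W ∩ ⋂ v : V, {x | x ∈ unitsSet F n ∧
      monM v.1 LinearMap.id x ∈ C₂} with hW₂
    have hW₁c : ZarClosedIn (unitsSet F n) W₁ :=
      zarClosedIn_inter hWc (zarClosedIn_iInter fun v =>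
        zarClosedIn_preimage (hVsub v.2) LinearMap.id h1)
    have hW₂c : ZarClosedIn (unitsSet F n) W₂ :=
      zarClosedIn_inter hWc (zarClosedIn_iInter fun v =>
        zarClosedIn_preimage (hVsub v.2) LinearMap.id h2)
    have hmemW₁ : ∀ w, w ∈ W₁ ↔ w ∈ W ∧ ∀ v ∈ V, w * v ∈ C₁ := by
      intro w
      rw [hW₁]
      simp only [Set.mem_inter_iff, Set.mem_iInter, Set.mem_setOf_eq]
      constructor
      · rintro ⟨hw, h⟩
        refine ⟨hw, fun v hv => ?_⟩
        have := (h ⟨v, hv⟩).2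
        rwa [hmonM_mul, mul_comm] at this
      · rintro ⟨hw, h⟩
        refine ⟨hw, fun v => ⟨hWu hw, ?_⟩⟩
        rw [hmonM_mul, mul_comm]
        exact h v.1 v.2
    have hmemW₂ : ∀ w, w ∈ W₂ ↔ w ∈ W ∧ ∀ v ∈ V, w * v ∈ C₂ := by
      intro w
      rw [hW₂]
      simp only [Set.mem_inter_iff, Set.mem_iInter, Set.mem_setOf_eq]
      constructor
      · rintro ⟨hw, h⟩
        refine ⟨hw, fun v hv => ?_⟩
        have := (h ⟨v, hv⟩).2
        rwa [hmonM_mul, mul_comm] at this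
      · rintro ⟨hw, h⟩
        refine ⟨hw, fun v => ⟨hWu hw, ?_⟩⟩
        rw [hmonM_mul, mul_comm]
        exact h v.1 v.2
    -- each fiber lies in C₁ or C₂
    have hfibcase : ∀ w ∈ W, (∀ v ∈ V, w * v ∈ C₁) ∨ (∀ v ∈ V, w * v ∈ C₂) := by
      intro w hw
      have hwu := hWu hw
      set Fib : Set (Fin n → F) := monM w LinearMap.id '' V with hFib
      have hFib_mem : ∀ y, y ∈ Fib ↔ ∃ v ∈ V, y = w * v := by
        intro y
        rw [hFib]
        constructor
        · rintro ⟨v, hv, rfl⟩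
          exact ⟨v, hv, hmonM_mul w v⟩
        · rintro ⟨v, hv, rfl⟩
          exact ⟨v, hv, hmonM_mul w v⟩
      have hFibc : ZarClosedIn (unitsSet F n) Fib := by
        have hwinv : ∀ i, (w⁻¹ : Fin n → F) i ≠ 0 := fun i => inv_ne_zero (hwu i)
        have heq : Fib = {x | x ∈ unitsSet F n ∧ monM w⁻¹ LinearMap.id x ∈ V} := by
          ext y
          rw [hFib_mem]
          simp only [Set.mem_setOf_eq]
          constructor
          · rintro ⟨v, hv, rfl⟩
            have hvu := hVsub hv
            have : monM w⁻¹ LinearMap.id (w * v) = v := by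
              rw [hmonM_mul]
              funext i
              show (w i)⁻¹ * (w i * v i) = v i
              exact inv_mul_cancel_left₀ (hwu i) _
            rw [this]
            exact ⟨fun i => mul_ne_zero (hwu i) (hvu i), hv⟩
          · rintro ⟨hy, hv⟩
            refine ⟨monM w⁻¹ LinearMap.id y, hv, ?_⟩
            rw [hmonM_mul]
            funext i
            show y i = w i * ((w i)⁻¹ * y i)
            rw [mul_inv_cancel_left₀ (hwu i)]
        rw [heq]
        exact zarClosedIn_preimage hwinv LinearMap.id hVc
      have hFibi : IrredIn (unitsSet F n) Fib :=
        irredIn_image_monM hwu LinearMap.id hVc hVi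
      have hFibsub : Fib ⊆ C₁ ∪ C₂ := by
        intro y hy
        obtain ⟨v, hv, rfl⟩ := (hFib_mem y).1 hy
        rw [← hU]
        exact hfib w hw v hv
      have hsplit : Fib = (Fib ∩ C₁) ∪ (Fib ∩ C₂) := by
        rw [← Set.inter_union_distrib_left]
        exact (Set.inter_eq_self_of_subset_left hFibsub).symm
      rcases hFibi.2 _ _ (zarClosedIn_inter hFibc h1) (zarClosedIn_inter hFibc h2)
          hsplit with hF | hF
      · left
        intro v hv
        have : w * v ∈ Fib := (hFib_mem _).2 ⟨v, hv, rfl⟩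
        exact ((hF ▸ this : w * v ∈ Fib ∩ C₁)).2
      · right
        intro v hv
        have : w * v ∈ Fib := (hFib_mem _).2 ⟨v, hv, rfl⟩
        exact ((hF ▸ this : w * v ∈ Fib ∩ C₂)).2
    have hWcov : W = W₁ ∪ W₂ := by
      ext w
      constructor
      · intro hw
        rcases hfibcase w hw with h | h
        · exact Or.inl ((hmemW₁ w).2 ⟨hw, h⟩)
        · exact Or.inr ((hmemW₂ w).2 ⟨hw, h⟩)
      · rintro (h | h)
        · exact ((hmemW₁ w).1 h).1
        · exact ((hmemW₂ w).1 h).1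
    -- decompose an arbitrary element of W'
    have hdecomp : ∀ x ∈ W', ∃ v ∈ V, x = Psi x * v := by
      rintro x ⟨hxu, hΨx⟩
      refine ⟨pmap x * (pmap a)⁻¹, ?_, ?_⟩
      · rw [hVmem]
        have hpau : ∀ i, (pmap a)⁻¹ i ≠ 0 := fun i => inv_ne_zero (hpa_ne i)
        refine ⟨fun i => mul_ne_zero (hp_ne x hxu i) (hpau i), fun i => ?_⟩
        rw [chF_mul, chF_inv]
        have h1 : chF (piM (Pi.single i 1)) (pmap x) = 1 := by
          rw [hchp x hxu, hLM, chF_zero]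
        have h2 : chF (piM (Pi.single i 1)) (pmap a) = 1 := by
          rw [hchp a hau, hLM, chF_zero]
        rw [h1, h2]
        norm_num
      · funext i
        have hx' : x i = pmap x i * qmap x i :=
          (congrArg (fun f => f i) (hpq x hxu)).symm
        have hqx : qmap x i = chF (piM (Pi.single i 1)) x := one_mul _
        show x i = (pmap a i * chF (piM (Pi.single i 1)) x)
          * (pmap x i * (pmap a i)⁻¹)
        rw [hx', hqx]
        field_simp
        rw [eq_div_iff (hpa_ne i)]
    rcases hWi.2 _ _ hW₁c hW₂c hWcov with hWeq' | hWeq'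
    · left
      refine Set.Subset.antisymm ?_ (hU ▸ Set.subset_union_left)
      intro x hx
      obtain ⟨v, hv, hxv⟩ := hdecomp x hx
      have hΨW : Psi x ∈ W₁ := hWeq' ▸ hx.2
      have := ((hmemW₁ _).1 hΨW).2 v hv
      rwa [← hxv] at this
    · right
      refine Set.Subset.antisymm ?_ (hU ▸ Set.subset_union_right)
      intro x hx
      obtain ⟨v, hv, hxv⟩ := hdecomp x hx
      have hΨW : Psi x ∈ W₂ := hWeq' ▸ hx.2
      have := ((hmemW₂ _).1 hΨW).2 v hv
      rwa [← hxv] at this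
  -- W' is contained in no proper torus
  have hW'nt : ¬ ∃ S : Set (Fin n → F), IsTorus S ∧ S ≠ unitsSet F n ∧ W' ⊆ S := by
    rintro ⟨S, ⟨E, hE, rfl⟩, hSne, hsub⟩
    apply hSne
    refine Set.Subset.antisymm (fun x hx => hx.1) ?_
    intro x hxu
    refine ⟨hxu, fun p hp => ?_⟩
    have hWchar : ∀ w ∈ W, chF p.1 w = p.2 := fun w hw => (hsub (hWsubW' hw)).2 p hp
    have hzL : p.1 ∈ Lsub := (hmemL p.1).2 fun w hw => by
      rw [hWchar w hw, hWchar a ha]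
    have hV1 : ∀ v ∈ V, chF p.1 v = 1 := by
      intro v hv
      have h1 : chF p.1 (a * v) = p.2 := (hsub (hfib a ha v hv)).2 p hp
      have h2 : chF p.1 a = p.2 := hWchar a ha
      rw [chF_mul, h2] at h1
      exact mul_left_cancel₀ (hE p hp) (h1.trans (mul_one p.2).symm)
    have hchF1 : ∀ y : Fin n → F, (∀ i, y i ≠ 0) → chF p.1 y = 1 := by
      intro y hy
      have hy' : y = pmap y * qmap y := (hpq y hy).symm
      rw [hy', chF_mul]
      have h1 : chF p.1 (pmap y) = 1 := hV1 _ (hpmemV y hy)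
      have h2 : chF p.1 (qmap y) = 1 := by
        rw [hchq y hy, hMzero _ hzL, chF_zero]
      rw [h1, h2, mul_one]
    have hp2 : p.2 = 1 := by rw [← hWchar a ha, hchF1 a hau]
    show chF p.1 x = p.2
    rw [hchF1 x hxu, hp2]
  exact ⟨W', hW'c, hW'i, hW'nt, by rw [hTeq]; exact hWeq⟩
end

section
/- Let F, F' be algebraically closed fields with F' ⊆ F, and let W ⊆ F^n be a Zariski closed set defined by polynomials with coefficients in F'. If W ∩ (F')^n is irreducible as a Zariski closed subset of (F')^n, then W is irreducible in F^n. Equivalently: if an ideal ⟨f_1,...,f_r⟩ ⊆ F'[x_1,...,x_n] is prime, then the ideal generated by f_1,...,f_r in F[x_1,...,x_n] is prime. -/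
open TensorProduct

noncomputable section

variable {k K : Type*} [Field k] [Field K] [IsAlgClosed k] [Algebra k K]
variable {A : Type*} [CommRing A] [IsDomain A] [Algebra k A] [Algebra.FiniteType k A]

omit [IsDomain A] in
theorem exists_char (m : Ideal A) (hm : m.IsMaximal) : ∃ χ : A →ₐ[k] k, m ≤ RingHom.ker χ := by
  haveI := hm
  haveI : Algebra.FiniteType k (A ⧸ m) :=
    Algebra.FiniteType.of_surjective (Ideal.Quotient.mkₐ k m)
      (Ideal.Quotient.mk_surjective)
  haveI : Module.Finite k (A ⧸ m) :=
    @finite_of_finite_type_of_isJacobsonRing k (A ⧸ m) _ (Ideal.Quotient.field m) _ _ _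
  haveI : Algebra.IsIntegral k (A ⧸ m) := Algebra.IsIntegral.of_finite k (A ⧸ m)
  have hsurj : Function.Surjective (algebraMap k (A ⧸ m)) :=
    IsAlgClosed.algebraMap_bijective_of_isIntegral.2
  have hinj : Function.Injective (algebraMap k (A ⧸ m)) :=
    (RingHom.injective_iff_ker_eq_bot (f := algebraMap k (A ⧸ m))).mpr
      (by
        rw [RingHom.ker_eq_bot_iff_eq_zero]
        intro x hx
        by_contra hne
        have : (algebraMap k (A ⧸ m)) (x⁻¹ * x) = 0 := by rw [map_mul, hx, mul_zero]
        rw [inv_mul_cancel₀ hne, map_one] at this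
        exact one_ne_zero this)
  let e : k ≃ₐ[k] (A ⧸ m) := AlgEquiv.ofBijective (Algebra.ofId k (A ⧸ m)) ⟨hinj, hsurj⟩
  refine ⟨e.symm.toAlgHom.comp (Ideal.Quotient.mkₐ k m), fun a ha => ?_⟩
  simp only [RingHom.mem_ker, AlgHom.coe_comp, Function.comp_apply, AlgEquiv.toAlgHom_eq_coe]
  have h0 : Ideal.Quotient.mkₐ k m a = 0 := by
    simpa using (Ideal.Quotient.eq_zero_iff_mem).mpr ha
  rw [h0]
  simp

theorem tensor_isDomain [IsJacobsonRing A] : IsDomain (K ⊗[k] A) := by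
  classical
  let v : Module.Basis _ k K := Module.Basis.ofVectorSpace k K
  let D : K ⊗[k] A ≃ₗ[k] (_ →₀ A) :=
    (TensorProduct.congr v.repr (LinearEquiv.refl k A)).trans
      (TensorProduct.finsuppScalarLeft k A _)
  -- the characters applied to tensors
  have key : ∀ (χ : A →ₐ[k] k) (z : K ⊗[k] A),
      Algebra.TensorProduct.productMap (AlgHom.id k K) ((Algebra.ofId k K).comp χ) z
        = v.repr.symm (Finsupp.mapRange.linearMap χ.toLinearMap (D z)) := by
    intro χ
    suffices h : (Algebra.TensorProduct.productMap (AlgHom.id k K)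
        ((Algebra.ofId k K).comp χ)).toLinearMap
        = v.repr.symm.toLinearMap ∘ₗ Finsupp.mapRange.linearMap χ.toLinearMap ∘ₗ D.toLinearMap by
      intro z
      exact DFunLike.congr_fun h z
    apply TensorProduct.ext'
    intro b a
    simp only [AlgHom.toLinearMap_apply, LinearMap.coe_comp, Function.comp_apply,
      LinearEquiv.coe_coe, Algebra.TensorProduct.productMap_apply_tmul, AlgHom.coe_id, id_eq,
      AlgHom.coe_comp, Algebra.ofId_apply]
    have hD : D (b ⊗ₜ[k] a) = Finsupp.mapRange.linearMap (LinearMap.lsmul k A |>.flip a)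
        (v.repr b) := by
      ext i
      simp only [D, LinearEquiv.trans_apply, TensorProduct.congr_tmul, LinearEquiv.refl_apply,
        TensorProduct.finsuppScalarLeft_apply_tmul_apply, Finsupp.mapRange.linearMap_apply,
        Finsupp.mapRange_apply, LinearMap.flip_apply, LinearMap.lsmul_apply]
    rw [hD]
    have : Finsupp.mapRange.linearMap χ.toLinearMap
        (Finsupp.mapRange.linearMap (LinearMap.lsmul k A |>.flip a) (v.repr b))
        = χ a • v.repr b := by
      ext i
      simp [Finsupp.mapRange_apply, mul_comm]
    rw [this, map_smul, v.repr.symm_apply_apply, Algebra.smul_def, mul_comm]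
  have hz : ∀ (χ : A →ₐ[k] k) (z : K ⊗[k] A),
      Algebra.TensorProduct.productMap (AlgHom.id k K) ((Algebra.ofId k K).comp χ) z = 0 →
      ∀ i, χ (D z i) = 0 := by
    intro χ z h i
    rw [key] at h
    have : Finsupp.mapRange.linearMap χ.toLinearMap (D z) = 0 := by
      apply v.repr.symm.injective
      simpa using h
    have := DFunLike.congr_fun this i
    simpa using this
  haveI : Nontrivial (K ⊗[k] A) := by
    obtain ⟨i⟩ := v.index_nonempty
    refine ⟨D.symm (Finsupp.single i 1), 0, fun h => ?_⟩
    have : (Finsupp.single i (1:A)) = 0 := by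
      simpa using congrArg D h
    simpa using DFunLike.congr_fun this i
  have nzd : ∀ z w : K ⊗[k] A, z * w = 0 → z = 0 ∨ w = 0 := by
    intro z w hzw
    let I : Ideal A := Ideal.span (Set.range (D z))
    let J : Ideal A := Ideal.span (Set.range (D w))
    have hIJ : I * J = ⊥ := by
      rw [eq_bot_iff]
      have hjac : (⊥ : Ideal A).jacobson = ⊥ :=
        IsJacobsonRing.out' _ Ideal.isRadical_bot_of_noZeroDivisors
      rw [← hjac, Ideal.jacobson]
      refine le_sInf ?_
      rintro m ⟨-, hm⟩
      obtain ⟨χ, hχ⟩ := exists_char (k := k) m hm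
      have hne : RingHom.ker χ ≠ ⊤ := by
        intro h
        have h1 : (1 : A) ∈ RingHom.ker χ := h.symm ▸ Submodule.mem_top
        simp [RingHom.mem_ker] at h1
      have hker : RingHom.ker χ = m := (hm.eq_of_le hne hχ).symm
      have h0 : (Algebra.TensorProduct.productMap (AlgHom.id k K) ((Algebra.ofId k K).comp χ)) z *
          (Algebra.TensorProduct.productMap (AlgHom.id k K) ((Algebra.ofId k K).comp χ)) w = 0 := by
        rw [← map_mul, hzw, map_zero]
      rcases mul_eq_zero.mp h0 with h | h
      · refine Ideal.mul_le_left.trans (le_trans ?_ hker.le)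
        rw [Ideal.span_le]
        rintro _ ⟨i, rfl⟩
        exact hz χ z h i
      · refine Ideal.mul_le_right.trans (le_trans ?_ hker.le)
        rw [Ideal.span_le]
        rintro _ ⟨i, rfl⟩
        exact hz χ w h i
    rcases Ideal.mul_eq_bot.mp hIJ with h | h
    · left
      apply D.injective
      ext i
      simpa using (Ideal.span_eq_bot.mp h) (D z i) ⟨i, rfl⟩
    · right
      apply D.injective
      ext i
      simpa using (Ideal.span_eq_bot.mp h) (D w i) ⟨i, rfl⟩
  haveI : NoZeroDivisors (K ⊗[k] A) := ⟨fun {a b} h => nzd a b h⟩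
  exact NoZeroDivisors.to_isDomain _

end

set_option maxHeartbeats 1000000 in
set_option synthInstance.maxHeartbeats 200000 in
theorem map_isPrime_scalar_extension {F' F : Type*} [Field F'] [Field F]
    [IsAlgClosed F'] [IsAlgClosed F] [Algebra F' F] {n : ℕ}
    (P : Ideal (MvPolynomial (Fin n) F')) (hp : P.IsPrime) :
    (P.map (MvPolynomial.map (algebraMap F' F) : _ →+* MvPolynomial (Fin n) F)).IsPrime := by
  classical
  haveI := hp
  set Q : Ideal (MvPolynomial (Fin n) F) :=
    P.map (MvPolynomial.map (algebraMap F' F) : _ →+* MvPolynomial (Fin n) F) with hQ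
  haveI : Algebra.FiniteType F' (MvPolynomial (Fin n) F' ⧸ P) :=
    Algebra.FiniteType.of_surjective (Ideal.Quotient.mkₐ F' P)
      Ideal.Quotient.mk_surjective
  haveI : IsDomain (F ⊗[F'] (MvPolynomial (Fin n) F' ⧸ P)) := tensor_isDomain
  let e := MvPolynomial.algebraTensorAlgEquiv (σ := Fin n) F' F
  let ψ : MvPolynomial (Fin n) F →ₐ[F] F ⊗[F'] (MvPolynomial (Fin n) F' ⧸ P) :=
    (Algebra.TensorProduct.map (AlgHom.id F F) (Ideal.Quotient.mkₐ F' P)).comp e.symm.toAlgHom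
  have hPQ : ∀ p ∈ P, MvPolynomial.map (algebraMap F' F) p ∈ Q := fun p hpP =>
    Ideal.mem_map_of_mem _ hpP
  let Abar : (MvPolynomial (Fin n) F' ⧸ P) →ₐ[F'] (MvPolynomial (Fin n) F ⧸ Q) :=
    Ideal.Quotient.liftₐ P
      ((Ideal.Quotient.mkₐ F' Q).comp (MvPolynomial.mapAlgHom (Algebra.ofId F' F)))
      (by
        intro p hpP
        show Ideal.Quotient.mk Q (MvPolynomial.map (algebraMap F' F) p) = 0
        exact Ideal.Quotient.eq_zero_iff_mem.mpr (hPQ p hpP))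
  let χb : F ⊗[F'] (MvPolynomial (Fin n) F' ⧸ P) →ₐ[F'] (MvPolynomial (Fin n) F ⧸ Q) :=
    Algebra.TensorProduct.productMap
      (IsScalarTower.toAlgHom F' F (MvPolynomial (Fin n) F ⧸ Q)) Abar
  have hψC : ∀ a : F, ψ (MvPolynomial.C a) = a ⊗ₜ[F'] 1 := by
    intro a
    have h : (MvPolynomial.C a : MvPolynomial (Fin n) F) = algebraMap F _ a := rfl
    rw [h, AlgHom.commutes, Algebra.TensorProduct.algebraMap_apply]
    rfl
  have hψX : ∀ i, ψ (MvPolynomial.X i)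
      = 1 ⊗ₜ[F'] (Ideal.Quotient.mk P (MvPolynomial.X i)) := by
    intro i
    show (Algebra.TensorProduct.map (AlgHom.id F F) (Ideal.Quotient.mkₐ F' P))
      (e.symm (MvPolynomial.X i)) = _
    rw [MvPolynomial.algebraTensorAlgEquiv_symm_X, Algebra.TensorProduct.map_tmul]
    rfl
  have hcomp : ∀ z, χb (ψ z) = Ideal.Quotient.mk Q z := by
    have hext : (χb.toRingHom.comp ψ.toRingHom) = (Ideal.Quotient.mk Q) := by
      apply MvPolynomial.ringHom_ext
      · intro a
        simp only [RingHom.coe_comp, Function.comp_apply, AlgHom.toRingHom_eq_coe,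
          RingHom.coe_coe]
        rw [hψC a]
        show (IsScalarTower.toAlgHom F' F _) a * Abar 1 = _
        rw [map_one, mul_one]
        rfl
      · intro i
        simp only [RingHom.coe_comp, Function.comp_apply, AlgHom.toRingHom_eq_coe,
          RingHom.coe_coe]
        rw [hψX i]
        show (IsScalarTower.toAlgHom F' F _) 1 * Abar (Ideal.Quotient.mk P (MvPolynomial.X i)) = _
        rw [map_one, one_mul]
        show Ideal.Quotient.mk Q (MvPolynomial.map (algebraMap F' F) (MvPolynomial.X i)) = _
        rw [MvPolynomial.map_X]
    intro z
    exact RingHom.congr_fun hext z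
  have hχb0 : χb 0 = 0 := map_zero χb
  have hkerQ : RingHom.ker ψ.toRingHom = Q := by
    apply le_antisymm
    · intro z hz
      rw [RingHom.mem_ker] at hz
      have hc := hcomp z
      rw [show ψ.toRingHom z = ψ z from rfl] at hz
      rw [hz, hχb0] at hc
      exact Ideal.Quotient.eq_zero_iff_mem.mp hc.symm
    · rw [hQ, Ideal.map_le_iff_le_comap]
      intro p hpP
      rw [Ideal.mem_comap, RingHom.mem_ker]
      have h1f : e (1 ⊗ₜ[F'] p) = MvPolynomial.map (algebraMap F' F) p := by
        rw [MvPolynomial.algebraTensorAlgEquiv_tmul, one_smul]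
      have h2 : e.symm (MvPolynomial.map (algebraMap F' F) p) = 1 ⊗ₜ[F'] p := by
        rw [← h1f, AlgEquiv.symm_apply_apply]
      show (Algebra.TensorProduct.map (AlgHom.id F F) (Ideal.Quotient.mkₐ F' P))
        (e.symm (MvPolynomial.map (algebraMap F' F) p)) = 0
      rw [h2, Algebra.TensorProduct.map_tmul]
      have h0 : (Ideal.Quotient.mkₐ F' P) p = 0 :=
        Ideal.Quotient.eq_zero_iff_mem.mpr hpP
      rw [h0, tmul_zero]
  have hker := RingHom.ker_isPrime ψ.toRingHom
  rw [hkerQ] at hker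
  exact hker

/-- If `F' ⊆ F` are algebraically closed fields and `f₁,...,f_r ∈ F'[x₁,...,x_n]` generate a
prime ideal of `F'[x₁,...,x_n]`, then they generate a prime ideal of `F[x₁,...,x_n]`. -/
theorem prime_ideal_scalar_extension {F' F : Type*} [Field F'] [Field F]
    [IsAlgClosed F'] [IsAlgClosed F] [Algebra F' F] {n : ℕ}
    (s : Finset (MvPolynomial (Fin n) F'))
    (hp : (Ideal.span (s : Set (MvPolynomial (Fin n) F'))).IsPrime) :
    (Ideal.span ((MvPolynomial.map (algebraMap F' F)) '' (s : Set (MvPolynomial (Fin n) F')))).IsPrime := by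
  have h := map_isPrime_scalar_extension (F := F) (Ideal.span (s : Set (MvPolynomial (Fin n) F'))) hp
  rwa [Ideal.map_span] at h
end
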